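/- arXiv:2301.08459 — 9 statements merged into one kernel-verified Lean document; each statement's English description precedes it below -/
import Mathlib

section
/- Let n ≥ 2 and d ≥ 3 be integers, and suppose there exists an integer q with 2 ≤ q ≤ n and q dividing d; write k = d/q. Then the homogeneous polynomial g = (x_1⋯x_q)^k + x_{q+1}^d + ⋯ + x_n^d ∈ ℂ[x_1,…,x_n] of degree d satisfies H(g) = α·(x_1⋯x_n)^{d−2} for some nonzero constant α ∈ ℂ, yet g is not of the form α_1 x_1^d + ⋯ + α_n x_n^d for any constants α_1,…,α_n ∈ ℂ. In particular, the answer to Koiran–Skomra's question is negative for all such pairs (n,d). -/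
open MvPolynomial

/-- The Hessian determinant of a multivariate polynomial. -/
noncomputable def hessDet {n : ℕ} (f : MvPolynomial (Fin n) ℂ) : MvPolynomial (Fin n) ℂ :=
  Matrix.det (Matrix.of fun i j => pderiv i (pderiv j f))

theorem ks_prod_mono {ι σ : Type*} (s : Finset ι) (f : ι → (σ →₀ ℕ)) (c : ℂ) :
    ∏ i ∈ s, (monomial (f i) c : MvPolynomial σ ℂ)
      = monomial (∑ i ∈ s, f i) (c ^ s.card) := by
  induction s using Finset.cons_induction with
  | empty => simp
  | cons a s ha ih =>
      rw [Finset.prod_cons, ih, monomial_mul, Finset.sum_cons, Finset.card_cons, pow_succ,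
        mul_comm c]

theorem ks_sum_single_apply {ι : Type*} [DecidableEq ι] (s : Finset ι) (m : ℕ) (j : ι) :
    (∑ i ∈ s, Finsupp.single i m) j = if j ∈ s then m else 0 := by
  classical
  simp [Finsupp.finset_sum_apply, Finsupp.single_apply, Finset.sum_ite_eq]

/-- Theorem (negative answer to Koiran–Skomra's question): for `n ≥ 2`, `d ≥ 3` and
`2 ≤ q ≤ n` with `q ∣ d`, the polynomial `g = (x_1⋯x_q)^{d/q} + x_{q+1}^d + ⋯ + x_n^d`
has Hessian `α (x_1⋯x_n)^{d-2}` with `α ≠ 0`, yet `g` is not of the form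
`α_1 x_1^d + ⋯ + α_n x_n^d`. -/
theorem koiran_skomra_negative (n d q : ℕ) (hn : 2 ≤ n) (hd : 3 ≤ d)
    (hq2 : 2 ≤ q) (hqn : q ≤ n) (hqd : q ∣ d) :
    ∀ g : MvPolynomial (Fin n) ℂ,
      g = (∏ i ∈ Finset.univ.filter (fun i : Fin n => (i : ℕ) < q), X i) ^ (d / q) +
          ∑ i ∈ Finset.univ.filter (fun i : Fin n => q ≤ (i : ℕ)), X i ^ d →
      g.IsHomogeneous d ∧
      (∃ α : ℂ, α ≠ 0 ∧ hessDet g = C α * (∏ i : Fin n, X i) ^ (d - 2)) ∧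
      ¬ ∃ a : Fin n → ℂ, g = ∑ i : Fin n, C (a i) * X i ^ d := by
  classical
  intro g hg
  set k := d / q with hkdef
  have hkd : q * k = d := Nat.mul_div_cancel' hqd
  have hk1 : 1 ≤ k := by
    rcases Nat.eq_zero_or_pos k with h | h
    · rw [h, mul_zero] at hkd; omega
    · exact h
  set S : Finset (Fin n) := Finset.univ.filter (fun i : Fin n => (i : ℕ) < q) with hS
  set T : Finset (Fin n) := Finset.univ.filter (fun i : Fin n => q ≤ (i : ℕ)) with hT
  have hmemS : ∀ i : Fin n, i ∈ S ↔ (i : ℕ) < q := by simp [hS]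
  have hmemT : ∀ i : Fin n, i ∈ T ↔ q ≤ (i : ℕ) := by simp [hT]
  set u : Fin n →₀ ℕ := ∑ i ∈ S, Finsupp.single i k with hudef
  have hu : ∀ j : Fin n, u j = if (j : ℕ) < q then k else 0 := by
    intro j; rw [hudef, ks_sum_single_apply]
    simp [hmemS]
  set G : MvPolynomial (Fin n) ℂ :=
    monomial u 1 + ∑ i ∈ T, monomial (Finsupp.single i d) 1 with hGdef
  -- the polynomial equals its monomial normal form
  have hScard : S.card = q := by
    rw [hS, ← Fintype.card_fin q, ← Finset.card_univ]
    apply Finset.card_nbij' (fun i : Fin n => (⟨(i : ℕ) % q, Nat.mod_lt _ (by omega)⟩ : Fin q))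
      (fun a : Fin q => (⟨(a : ℕ), lt_of_lt_of_le a.2 hqn⟩ : Fin n))
    · intro x hx; simp
    · intro a ha; simp [lt_of_lt_of_le a.2 hqn, a.2]
    · intro x hx; simp at hx; exact Fin.ext (by simp [Nat.mod_eq_of_lt hx])
    · intro a ha; exact Fin.ext (by simp [Nat.mod_eq_of_lt a.2])
  have hgG : g = G := by
    rw [hg, hGdef]
    congr 1
    · rw [← Finset.prod_pow]
      simp_rw [X_pow_eq_monomial]
      rw [ks_prod_mono, one_pow, hudef]
    · exact Finset.sum_congr rfl fun i _ => X_pow_eq_monomial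
  -- first partial derivatives
  have hd1 : ∀ j : Fin n, pderiv j G =
      monomial (u - Finsupp.single j 1) ((u j : ℂ)) +
        (if q ≤ (j : ℕ) then monomial (Finsupp.single j d - Finsupp.single j 1) ((d : ℂ)) else 0) := by
    intro j
    rw [hGdef, map_add, pderiv_monomial, one_mul, map_sum]
    congr 1
    by_cases hj : q ≤ (j : ℕ)
    · rw [if_pos hj]
      rw [Finset.sum_eq_single j]
      · rw [pderiv_monomial, one_mul, Finsupp.single_eq_same]
      · intro t _ htj
        rw [pderiv_monomial, one_mul, Finsupp.single_eq_of_ne' htj, Nat.cast_zero,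
          monomial_zero]
      · intro h; exact absurd ((hmemT j).2 hj) h
    · rw [if_neg hj]
      apply Finset.sum_eq_zero
      intro t ht
      have htj : t ≠ j := by
        intro e; subst e; exact hj ((hmemT t).1 ht)
      rw [pderiv_monomial, one_mul, Finsupp.single_eq_of_ne' htj, Nat.cast_zero, monomial_zero]
  have hX : ∀ i : Fin n, (X i : MvPolynomial (Fin n) ℂ) = monomial (Finsupp.single i 1) 1 :=
    fun i => by rw [← X_pow_eq_monomial, pow_one]
  have mono_helper : ∀ (i j : Fin n) (e f : Fin n →₀ ℕ) (c : ℂ),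
      Finsupp.single i 1 + Finsupp.single j 1 + e = f →
      X i * X j * monomial e c = monomial f c := by
    intro i j e f c hc
    rw [hX i, hX j, monomial_mul, monomial_mul, one_mul, one_mul, hc]
  set N : Matrix (Fin n) (Fin n) (MvPolynomial (Fin n) ℂ) := Matrix.of fun i j =>
    if (i : ℕ) < q ∧ (j : ℕ) < q then
      monomial u (((k * (if i = j then k - 1 else k) : ℕ)) : ℂ)
    else if i = j then monomial (Finsupp.single i d) (((d * (d - 1) : ℕ)) : ℂ)
    else 0 with hNdef
  have key : ∀ i j : Fin n, (X i * X j) * pderiv i (pderiv j G) = N i j := by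
    intro i j
    rw [hd1 j, map_add, pderiv_monomial]
    by_cases hj : (j : ℕ) < q
    · rw [if_neg (by omega), map_zero, add_zero]
      have huj : u j = k := by rw [hu j, if_pos hj]
      by_cases hi : (i : ℕ) < q
      · -- both in first block
        rw [hNdef, Matrix.of_apply, if_pos ⟨hi, hj⟩]
        have hui : ((u - Finsupp.single j 1 : Fin n →₀ ℕ)) i = if i = j then k - 1 else k := by
          rw [Finsupp.tsub_apply, hu i, if_pos hi, Finsupp.single_apply]
          split_ifs with h1 h2 h3 <;>
            first
              | rfl
              | omega
              | exact absurd h1.symm h2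
              | exact absurd h3.symm h1
        rw [huj, hui]
        by_cases hij : i = j
        · subst hij
          rw [if_pos rfl, ← Nat.cast_mul]
          by_cases hk2 : k = 1
          · simp [hk2]
          · apply mono_helper
            ext a
            simp only [Finsupp.coe_add, Finsupp.coe_tsub, Pi.add_apply, Pi.sub_apply,
              Finsupp.single_apply, hu a]
            split_ifs <;> omega
        · rw [if_neg hij, ← Nat.cast_mul]
          apply mono_helper
          have hji : ¬ j = i := fun h => hij h.symm
          ext a
          simp only [Finsupp.coe_add, Finsupp.coe_tsub, Pi.add_apply, Pi.sub_apply,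
            Finsupp.single_apply, hu a]
          split_ifs <;> omega
      · -- i ≥ q, j < q : zero
        rw [hNdef, Matrix.of_apply, if_neg (by tauto),
          if_neg (by intro h; subst h; exact hi hj)]
        have : ((u - Finsupp.single j 1 : Fin n →₀ ℕ)) i = 0 := by
          rw [Finsupp.tsub_apply, hu i, if_neg hi]
          exact Nat.zero_sub _
        rw [this, Nat.cast_zero, mul_zero, monomial_zero, mul_zero]
    · -- j ≥ q
      have huj : u j = 0 := by rw [hu j, if_neg hj]
      rw [if_pos (by omega), huj, Nat.cast_zero, zero_mul, monomial_zero, zero_add,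
        pderiv_monomial]
      by_cases hij : i = j
      · subst hij
        rw [hNdef, Matrix.of_apply, if_neg (by tauto), if_pos rfl]
        have hsi : ((Finsupp.single i d - Finsupp.single i 1 : Fin n →₀ ℕ)) i = d - 1 := by
          rw [Finsupp.tsub_apply, Finsupp.single_eq_same, Finsupp.single_eq_same]
        rw [hsi, ← Nat.cast_mul]
        apply mono_helper
        ext a
        simp only [Finsupp.coe_add, Finsupp.coe_tsub, Pi.add_apply, Pi.sub_apply,
          Finsupp.single_apply]
        split_ifs <;> omega
      · rw [hNdef, Matrix.of_apply, if_neg (by tauto), if_neg hij]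
        have hsi : ((Finsupp.single j d - Finsupp.single j 1 : Fin n →₀ ℕ)) i = 0 := by
          rw [Finsupp.tsub_apply, Finsupp.single_eq_of_ne' (fun h => hij h.symm),
            Finsupp.single_eq_of_ne' (fun h => hij h.symm)]
          rfl
        rw [hsi, Nat.cast_zero, mul_zero, monomial_zero, mul_zero]
  -- conjugation by the diagonal matrix of variables
  have hconj : Matrix.diagonal (fun i : Fin n => (X i : MvPolynomial (Fin n) ℂ)) *
      (Matrix.of fun i j => pderiv i (pderiv j G)) *
      Matrix.diagonal (fun i : Fin n => (X i : MvPolynomial (Fin n) ℂ)) = N := by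
    ext i j
    rw [Matrix.mul_diagonal, Matrix.diagonal_mul, Matrix.of_apply, ← key i j]
    ring
  have hdet1 : (∏ i : Fin n, (X i : MvPolynomial (Fin n) ℂ)) *
      (∏ i : Fin n, (X i : MvPolynomial (Fin n) ℂ)) * hessDet G = N.det := by
    rw [← hconj, Matrix.det_mul, Matrix.det_mul, Matrix.det_diagonal]
    unfold hessDet
    ring
  -- block structure
  have hnq : q + (n - q) = n := by omega
  set e : Fin q ⊕ Fin (n - q) ≃ Fin n := finSumFinEquiv.trans (finCongr hnq) with hedef
  have he1 : ∀ a : Fin q, ((e (Sum.inl a)) : ℕ) = (a : ℕ) := by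
    intro a; simp [hedef]
  have he2 : ∀ b : Fin (n - q), ((e (Sum.inr b)) : ℕ) = q + (b : ℕ) := by
    intro b; simp [hedef]
  set cq : Matrix (Fin q) (Fin q) ℂ := Matrix.of fun a b =>
    (((k * (if a = b then k - 1 else k) : ℕ)) : ℂ) with hcqdef
  set Ablk : Matrix (Fin q) (Fin q) (MvPolynomial (Fin n) ℂ) :=
    Matrix.of fun a b => monomial u (cq a b) with hAdef
  set Dblk : Matrix (Fin (n - q)) (Fin (n - q)) (MvPolynomial (Fin n) ℂ) :=
    Matrix.diagonal (fun b => monomial (Finsupp.single (e (Sum.inr b)) d)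
      (((d * (d - 1) : ℕ)) : ℂ)) with hDdef
  have hblock : Matrix.reindex e.symm e.symm N = Matrix.fromBlocks Ablk 0 0 Dblk := by
    apply Matrix.ext
    rintro (a | b) (a' | b')
    · rw [Matrix.reindex_apply, Matrix.submatrix_apply, Equiv.symm_symm]
      rw [hNdef, Matrix.of_apply, if_pos ⟨by rw [he1]; exact a.2, by rw [he1]; exact a'.2⟩]
      have : (e (Sum.inl a) = e (Sum.inl a')) ↔ (a = a') := by
        rw [e.injective.eq_iff, Sum.inl.injEq]
      simp only [Matrix.fromBlocks_apply₁₁, hAdef, Matrix.of_apply, hcqdef]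
      by_cases hab : a = a'
      · rw [if_pos (this.mpr hab), if_pos hab]
      · rw [if_neg (fun h => hab (this.mp h)), if_neg hab]
    · have hne : ¬ (e (Sum.inl a) = e (Sum.inr b')) := by
        intro h
        have h2 : ((e (Sum.inl a)) : ℕ) = ((e (Sum.inr b')) : ℕ) := by rw [h]
        rw [he1, he2] at h2; omega
      rw [Matrix.reindex_apply, Matrix.submatrix_apply, Equiv.symm_symm]
      rw [hNdef, Matrix.of_apply, if_neg (by rw [he1, he2]; omega), if_neg hne]
      rfl
    · have hne : ¬ (e (Sum.inr b) = e (Sum.inl a')) := by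
        intro h
        have h2 : ((e (Sum.inr b)) : ℕ) = ((e (Sum.inl a')) : ℕ) := by rw [h]
        rw [he1, he2] at h2; omega
      rw [Matrix.reindex_apply, Matrix.submatrix_apply, Equiv.symm_symm]
      rw [hNdef, Matrix.of_apply, if_neg (by rw [he2]; omega), if_neg hne]
      rfl
    · rw [Matrix.reindex_apply, Matrix.submatrix_apply, Equiv.symm_symm]
      rw [hNdef, Matrix.of_apply, if_neg (by rw [he2]; omega)]
      simp only [Matrix.fromBlocks_apply₂₂, hDdef]
      by_cases hbb : b = b'
      · subst hbb; rw [if_pos rfl, Matrix.diagonal_apply_eq]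
      · have hne : ¬ (e (Sum.inr b) = e (Sum.inr b')) := by
          intro h
          exact hbb (Sum.inr_injective (e.injective h))
        rw [if_neg hne, Matrix.diagonal_apply_ne _ (fun h => hbb h)]
  -- determinant of the diagonal block
  set t : Fin n →₀ ℕ := ∑ b : Fin (n - q), Finsupp.single (e (Sum.inr b)) d with htdef
  have ht : ∀ a : Fin n, t a = if q ≤ (a : ℕ) then d else 0 := by
    intro a
    have himg : a ∈ Finset.univ.image (fun b : Fin (n - q) => e (Sum.inr b)) ↔ q ≤ (a : ℕ) := by
      simp only [Finset.mem_image, Finset.mem_univ, true_and]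
      constructor
      · rintro ⟨b, rfl⟩; rw [he2]; omega
      · intro hqa
        refine ⟨⟨(a : ℕ) - q, by omega⟩, ?_⟩
        apply Fin.ext
        rw [he2]
        simp
        omega
    have hsum : (∑ b : Fin (n - q), Finsupp.single (e (Sum.inr b)) d) =
        ∑ i ∈ Finset.univ.image (fun b : Fin (n - q) => e (Sum.inr b)), Finsupp.single i d :=
      (Finset.sum_image (f := fun i : Fin n => (Finsupp.single i d : Fin n →₀ ℕ))
        (g := fun b : Fin (n - q) => e (Sum.inr b))
        (fun x _ y _ h => Sum.inr_injective (e.injective h))).symm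
    rw [htdef, hsum, ks_sum_single_apply]
    simp [himg]
  have hdetDblk : Dblk.det = monomial t ((((d * (d - 1) : ℕ)) : ℂ) ^ (n - q)) := by
    rw [hDdef, Matrix.det_diagonal, ks_prod_mono, htdef]
    congr 1
    simp
  -- determinant of the constant block
  have hcqdet : cq.det = (-(k : ℂ)) ^ q * (1 - (d : ℂ)) := by
    have hcq2 : cq = (-(k : ℂ)) •
        (1 + Matrix.replicateCol Unit (fun _ => -(k : ℂ)) * Matrix.replicateRow Unit (fun _ => (1 : ℂ))) := by
      apply Matrix.ext; intro a b
      simp only [hcqdef, Matrix.of_apply, Matrix.smul_apply, Matrix.add_apply, Matrix.mul_apply,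
        Matrix.replicateCol_apply, Matrix.replicateRow_apply, Finset.univ_unique, Finset.sum_singleton,
        smul_eq_mul, mul_one]
      by_cases hab : a = b
      · subst hab
        rw [Matrix.one_apply_eq, if_pos rfl]
        push_cast [Nat.cast_sub hk1]
        ring
      · rw [Matrix.one_apply_ne hab, if_neg hab]
        push_cast
        ring
    rw [hcq2, Matrix.det_smul, Matrix.det_one_add_replicateCol_mul_replicateRow, Fintype.card_fin,
      dotProduct]
    simp only [one_mul, Finset.sum_const, Finset.card_univ, Fintype.card_fin, nsmul_eq_mul]
    rw [← hkd]
    push_cast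
    ring
  -- determinant of the monomial block
  have hAblk2 : Ablk = (monomial u (1 : ℂ)) • (cq.map C) := by
    apply Matrix.ext; intro a b
    simp only [hAdef, Matrix.of_apply, Matrix.smul_apply, Matrix.map_apply, smul_eq_mul]
    rw [mul_comm, C_mul_monomial, mul_one]
  have hdetAblk : Ablk.det = monomial (q • u) cq.det := by
    rw [hAblk2, Matrix.det_smul, Fintype.card_fin, monomial_pow, one_pow,
      show (cq.map (C : ℂ →+* MvPolynomial (Fin n) ℂ)).det = C cq.det from
        (RingHom.map_det (C : ℂ →+* MvPolynomial (Fin n) ℂ) cq).symm]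
    rw [mul_comm, C_mul_monomial, mul_one]
  -- determinant of N
  have hdetN : N.det = monomial ((q • u) + t) (cq.det * ((((d * (d - 1) : ℕ)) : ℂ) ^ (n - q))) := by
    rw [← Matrix.det_reindex_self e.symm N, hblock, Matrix.det_fromBlocks_zero₂₁,
      hdetAblk, hdetDblk, monomial_mul]
  -- the all-ones exponent
  set w : Fin n →₀ ℕ := ∑ i : Fin n, Finsupp.single i 1 with hwdef
  have hw : ∀ a : Fin n, w a = 1 := by
    intro a; rw [hwdef, ks_sum_single_apply]; simp
  have hprodX : (∏ i : Fin n, (X i : MvPolynomial (Fin n) ℂ)) = monomial w 1 := by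
    rw [Finset.prod_congr rfl (fun i _ => hX i), ks_prod_mono, one_pow, hwdef]
  set α : ℂ := ((-(k : ℂ)) ^ q * (1 - (d : ℂ))) * (((d * (d - 1) : ℕ) : ℂ) ^ (n - q)) with hαdef
  have hαne : α ≠ 0 := by
    rw [hαdef]
    apply mul_ne_zero (mul_ne_zero ?_ ?_) ?_
    · exact pow_ne_zero _ (neg_ne_zero.mpr (Nat.cast_ne_zero.mpr (by omega)))
    · intro h
      have hcast : ((d : ℕ) : ℂ) = ((1 : ℕ) : ℂ) := by push_cast; linear_combination -h
      have := Nat.cast_inj (R := ℂ).mp hcast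
      omega
    · exact pow_ne_zero _ (Nat.cast_ne_zero.mpr (Nat.mul_ne_zero (by omega) (by omega)))
  have hexp : (q • u) + t = d • w := by
    ext a
    rw [Finsupp.add_apply, Finsupp.smul_apply, Finsupp.smul_apply, hu a, ht a, hw a,
      smul_eq_mul, smul_eq_mul, mul_one]
    by_cases h : (a : ℕ) < q
    · rw [if_pos h, if_neg (by omega), add_zero, hkd]
    · rw [if_neg h, if_pos (by omega), mul_zero, zero_add]
  have hmain : hessDet G = C α * (∏ i : Fin n, X i) ^ (d - 2) := by
    have hXne : (monomial w (1 : ℂ) : MvPolynomial (Fin n) ℂ) ≠ 0 := by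
      rw [Ne, monomial_eq_zero]; exact one_ne_zero
    apply mul_left_cancel₀ (mul_ne_zero hXne hXne)
    calc (monomial w (1:ℂ) * monomial w 1) * hessDet G
        = N.det := by rw [← hprodX]; exact hdet1
      _ = monomial ((q • u) + t) (cq.det * ((((d * (d - 1) : ℕ)) : ℂ) ^ (n - q))) := hdetN
      _ = monomial (d • w) α := by rw [hexp, hcqdet, hαdef]
      _ = (monomial w 1 * monomial w 1) * (C α * (∏ i : Fin n, X i) ^ (d - 2)) := by
          have hw2 : d • w = w + w + (d - 2) • w := by
            ext a
            simp only [Finsupp.add_apply, Finsupp.smul_apply, hw a, smul_eq_mul, mul_one]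
            omega
          rw [hprodX, monomial_pow, one_pow, C_mul_monomial, mul_one, monomial_mul,
            monomial_mul, one_mul, one_mul, hw2]
  -- degrees
  have hdeg : ∀ v : Fin n →₀ ℕ, v.degree = ∑ i : Fin n, v i := by
    intro v
    show (∑ i ∈ v.support, v i) = ∑ i : Fin n, v i
    exact Finset.sum_subset (Finset.subset_univ v.support)
      (fun x _ hx => Finsupp.notMem_support_iff.mp hx)
  have hudeg : u.degree = d := by
    rw [hdeg, Finset.sum_congr rfl (fun i _ => hu i), ← Finset.sum_filter, ← hS,
      Finset.sum_const, hScard, smul_eq_mul, hkd]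
  refine ⟨?_, ⟨α, hαne, by rw [hgG]; exact hmain⟩, ?_⟩
  · rw [hgG, hGdef]
    apply IsHomogeneous.add
    · exact isHomogeneous_monomial _ hudeg
    · apply IsHomogeneous.sum
      intro i _
      apply isHomogeneous_monomial
      rw [hdeg]
      simp [Finsupp.single_apply, Finset.sum_ite_eq]
  · rintro ⟨a, ha⟩
    have hune : ∀ i : Fin n, (Finsupp.single i d : Fin n →₀ ℕ) ≠ u := by
      intro i h
      have e0 : u (⟨0, by omega⟩ : Fin n) = k := by
        rw [hu]; exact if_pos ((by omega : (0 : ℕ) < q) : ((⟨0, by omega⟩ : Fin n) : ℕ) < q)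
      have e1 : u (⟨1, by omega⟩ : Fin n) = k := by
        rw [hu]; exact if_pos ((by omega : (1 : ℕ) < q) : ((⟨1, by omega⟩ : Fin n) : ℕ) < q)
      rw [← h, Finsupp.single_apply] at e0 e1
      by_cases h0 : i = (⟨0, by omega⟩ : Fin n)
      · rw [if_neg (by rw [h0]; intro hc; have := congrArg Fin.val hc; simp at this)] at e1
        omega
      · rw [if_neg h0] at e0
        omega
    have hL : coeff u G = 1 := by
      rw [hGdef, coeff_add, coeff_monomial, if_pos rfl, coeff_sum,
        Finset.sum_eq_zero (fun i _ => by rw [coeff_monomial, if_neg (hune i)]), add_zero]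
    have hR : coeff u (∑ i : Fin n, C (a i) * X i ^ d) = 0 := by
      rw [coeff_sum]
      apply Finset.sum_eq_zero
      intro i _
      rw [X_pow_eq_monomial, C_mul_monomial, mul_one, coeff_monomial, if_neg (hune i)]
    rw [← ha, hgG, hL] at hR
    exact one_ne_zero hR
end

section
/- Let f ∈ ℂ[x_1,x_2] be a homogeneous polynomial of degree 3 such that H(f) = α·x_1x_2 for some nonzero α ∈ ℂ. Then f = α_1 x_1^3 + α_2 x_2^3 for some constants α_1, α_2 ∈ ℂ. -/
open MvPolynomial

lemma deg2_aux (m : Fin 2 →₀ ℕ) : m.degree = m 0 + m 1 := by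
  rw [Finsupp.degree_apply, Finset.sum_subset (Finset.subset_univ _)]
  · exact Fin.sum_univ_two m
  · intro i _ h; simpa using h

lemma fin2_eq_aux (m : Fin 2 →₀ ℕ) :
    m = Finsupp.single 0 (m 0) + Finsupp.single 1 (m 1) := by
  ext i; fin_cases i <;> simp [Finsupp.single_apply]

lemma rep_aux (f : MvPolynomial (Fin 2) ℂ) (hf : f.IsHomogeneous 3) :
    f = C (coeff (Finsupp.single 0 3) f) * X 0 ^ 3
      + C (coeff (Finsupp.single 0 2 + Finsupp.single 1 1) f) * (X 0 ^ 2 * X 1)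
      + C (coeff (Finsupp.single 0 1 + Finsupp.single 1 2) f) * (X 0 * X 1 ^ 2)
      + C (coeff (Finsupp.single 1 3) f) * X 1 ^ 3 := by
  have h1 : (X (0 : Fin 2) : MvPolynomial (Fin 2) ℂ) ^ 3
      = monomial (Finsupp.single 0 3) 1 := by rw [X_pow_eq_monomial]
  have h2 : (X (0 : Fin 2) : MvPolynomial (Fin 2) ℂ) ^ 2 * X 1
      = monomial (Finsupp.single 0 2 + Finsupp.single 1 1) 1 := by
    rw [X_pow_eq_monomial, X, monomial_mul, one_mul]
  have h3 : (X (0 : Fin 2) : MvPolynomial (Fin 2) ℂ) * X 1 ^ 2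
      = monomial (Finsupp.single 0 1 + Finsupp.single 1 2) 1 := by
    rw [X_pow_eq_monomial, X, monomial_mul, one_mul]
  have h4 : (X (1 : Fin 2) : MvPolynomial (Fin 2) ℂ) ^ 3
      = monomial (Finsupp.single 1 3) 1 := by rw [X_pow_eq_monomial]
  ext m
  rw [h1, h2, h3, h4]
  simp only [coeff_add, coeff_C_mul, coeff_monomial, mul_ite, mul_one, mul_zero]
  by_cases hm3 : m 0 + m 1 = 3
  · have hcases : (m 0 = 3 ∧ m 1 = 0) ∨ (m 0 = 2 ∧ m 1 = 1) ∨ (m 0 = 1 ∧ m 1 = 2)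
        ∨ (m 0 = 0 ∧ m 1 = 3) := by omega
    have hm := fin2_eq_aux m
    rcases hcases with ⟨h0, h1'⟩ | ⟨h0, h1'⟩ | ⟨h0, h1'⟩ | ⟨h0, h1'⟩ <;>
      rw [h0, h1'] at hm <;>
      rw [hm] <;> simp [Finsupp.ext_iff, Fin.forall_fin_two, Finsupp.single_apply]
  · have hz : coeff m f = 0 := hf.coeff_eq_zero (by rw [deg2_aux]; omega)
    rw [hz]
    have key : ∀ p q : ℕ, p + q = 3 →
        ¬(Finsupp.single (0 : Fin 2) p + Finsupp.single 1 q = m) := by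
      intro p q hpq he
      apply hm3
      rw [← he]
      simp [Finsupp.single_apply]
      omega
    rw [if_neg, if_neg, if_neg, if_neg]
    · simp
    · simpa using key 0 3 rfl
    · exact key 1 2 rfl
    · exact key 2 1 rfl
    · simpa using key 3 0 rfl

lemma hess_eval_aux (a b c d : ℂ) (v : Fin 2 → ℂ) :
    eval v (hessDet (C a * X 0 ^ 3 + C b * (X 0 ^ 2 * X 1) + C c * (X 0 * X 1 ^ 2)
        + C d * X 1 ^ 3)) =
      (12*a*c - 4*b^2) * v 0 ^ 2 + (36*a*d - 4*b*c) * (v 0 * v 1)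
        + (12*b*d - 4*c^2) * v 1 ^ 2 := by
  simp only [hessDet, Matrix.det_fin_two, Matrix.of_apply, map_add, pderiv_C_mul, pderiv_pow,
    pderiv_mul, pderiv_X_self, pderiv_X_of_ne (show (0:Fin 2) ≠ 1 by decide),
    pderiv_X_of_ne (show (1:Fin 2) ≠ 0 by decide), pderiv_C, map_sub, map_mul, map_pow,
    eval_add, eval_mul, eval_pow, eval_C, eval_X, map_one, map_zero,
    Derivation.map_natCast, pderiv_one,
    mul_zero, zero_mul, mul_one, one_mul, add_zero, zero_add, map_natCast, map_ofNat]
  ring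

/-- If `f ∈ ℂ[x_1,x_2]` is homogeneous of degree `3` and `H(f) = α·x_1x_2` with `α ≠ 0`,
then `f = α_1 x_1^3 + α_2 x_2^3`. -/
theorem binary_cubic_fermat (f : MvPolynomial (Fin 2) ℂ) (hf : f.IsHomogeneous 3)
    (α : ℂ) (hα : α ≠ 0) (hH : hessDet f = C α * (X 0 * X 1)) :
    ∃ α₁ α₂ : ℂ, f = C α₁ * X 0 ^ 3 + C α₂ * X 1 ^ 3 := by
  set a := coeff (Finsupp.single 0 3) f with ha
  set b := coeff (Finsupp.single 0 2 + Finsupp.single 1 1) f with hbdef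
  set c := coeff (Finsupp.single 0 1 + Finsupp.single 1 2) f with hcdef
  set d := coeff (Finsupp.single 1 3) f with hd
  have hrep := rep_aux f hf
  have hev : ∀ v : Fin 2 → ℂ,
      (12*a*c - 4*b^2) * v 0 ^ 2 + (36*a*d - 4*b*c) * (v 0 * v 1)
        + (12*b*d - 4*c^2) * v 1 ^ 2 = α * (v 0 * v 1) := by
    intro v
    rw [← hess_eval_aux a b c d v, ← hrep, hH]
    simp
  have e1 := hev ![1, 0]
  have e2 := hev ![0, 1]
  have e3 := hev ![1, 1]
  simp [Matrix.cons_val_zero, Matrix.cons_val_one, Matrix.head_cons] at e1 e2 e3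
  -- e1 : 12ac - 4b² = 0 ; e2 : 12bd - 4c² = 0 ; e3 : sum = α
  have hb : b = 0 := by
    by_contra hb
    have hc : c ≠ 0 := by
      intro hc
      apply hb
      have : b ^ 2 = 0 := by rw [hc] at e1; linear_combination (-1/4 : ℂ) * e1
      exact pow_eq_zero_iff (n := 2) (by norm_num) |>.mp this
    have hbc : b * c ≠ 0 := mul_ne_zero hb hc
    have h9 : (144 * (a * d)) * (b * c) = (16 * (b * c)) * (b * c) := by
      linear_combination (12 * b * d) * e1 + (4 * b ^ 2) * e2
    have h9' : 144 * (a * d) = 16 * (b * c) := mul_right_cancel₀ hbc h9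
    exact hα (by linear_combination -e3 + e1 + e2 + (1/4 : ℂ) * h9')
  have hc : c = 0 := by
    have : c ^ 2 = 0 := by rw [hb] at e2; linear_combination (-1/4 : ℂ) * e2
    exact pow_eq_zero_iff (n := 2) (by norm_num) |>.mp this
  refine ⟨a, d, ?_⟩
  rw [hrep, ← ha, ← hbdef, ← hcdef, ← hd, hb, hc]
  simp
end

section
/- Let f ∈ ℂ[x_1,x_2,x_3] be a homogeneous polynomial of degree 3 such that H(f) = α·x_1x_2x_3 for some nonzero α ∈ ℂ. Then either f = a_1x_1^3 + a_2x_2^3 + a_3x_3^3 with a_1a_2a_3 ≠ 0, or f = a·x_1x_2x_3 with a ≠ 0. -/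
open MvPolynomial

set_option maxHeartbeats 1000000

lemma pderiv_two (i : Fin 3) : pderiv i (2 : MvPolynomial (Fin 3) ℂ) = 0 := by
  rw [show (2 : MvPolynomial (Fin 3) ℂ) = C 2 from (map_ofNat C 2).symm, pderiv_C]

lemma pderiv_three (i : Fin 3) : pderiv i (3 : MvPolynomial (Fin 3) ℂ) = 0 := by
  rw [show (3 : MvPolynomial (Fin 3) ℂ) = C 3 from (map_ofNat C 3).symm, pderiv_C]

open MvPolynomial

noncomputable def mk3 (i j k : ℕ) : Fin 3 →₀ ℕ :=
  Finsupp.single 0 i + Finsupp.single 1 j + Finsupp.single 2 k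

lemma mk3_apply0 (i j k : ℕ) : mk3 i j k 0 = i := by simp [mk3, Finsupp.single_apply]
lemma mk3_apply1 (i j k : ℕ) : mk3 i j k 1 = j := by simp [mk3, Finsupp.single_apply]
lemma mk3_apply2 (i j k : ℕ) : mk3 i j k 2 = k := by simp [mk3, Finsupp.single_apply]

lemma mk3_self (m : Fin 3 →₀ ℕ) : mk3 (m 0) (m 1) (m 2) = m := by
  ext j; fin_cases j <;> simp [mk3, Finsupp.single_apply]

lemma mk3_eq_iff {i j k : ℕ} {m : Fin 3 →₀ ℕ} :
    mk3 i j k = m ↔ i = m 0 ∧ j = m 1 ∧ k = m 2 := by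
  constructor
  · rintro rfl; exact ⟨(mk3_apply0 i j k).symm, (mk3_apply1 i j k).symm, (mk3_apply2 i j k).symm⟩
  · rintro ⟨rfl, rfl, rfl⟩; exact mk3_self m

lemma degree_fin3 (m : Fin 3 →₀ ℕ) : m.degree = m 0 + m 1 + m 2 := by
  rw [Finsupp.degree_apply, Finset.sum_subset (Finset.subset_univ m.support)
    (fun i _ hi => Finsupp.notMem_support_iff.mp hi), Fin.sum_univ_three]

lemma tri_cases (x y z : ℕ) (h3 : x + y + z = 3) :
        (3 = x ∧ 0 = y ∧ 0 = z) ∨ (0 = x ∧ 3 = y ∧ 0 = z) ∨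
        (0 = x ∧ 0 = y ∧ 3 = z) ∨ (2 = x ∧ 1 = y ∧ 0 = z) ∨
        (2 = x ∧ 0 = y ∧ 1 = z) ∨ (1 = x ∧ 2 = y ∧ 0 = z) ∨
        (0 = x ∧ 2 = y ∧ 1 = z) ∨ (1 = x ∧ 0 = y ∧ 2 = z) ∨
        (0 = x ∧ 1 = y ∧ 2 = z) ∨ (1 = x ∧ 1 = y ∧ 1 = z) := by
  have hx : x ≤ 3 := by omega
  have hy : y ≤ 3 := by omega
  interval_cases x <;> interval_cases y <;> simp <;> omega

lemma cubic_decomp (f : MvPolynomial (Fin 3) ℂ) (hf : f.IsHomogeneous 3) :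
    f = monomial (mk3 3 0 0) (coeff (mk3 3 0 0) f) + monomial (mk3 0 3 0) (coeff (mk3 0 3 0) f)
      + monomial (mk3 0 0 3) (coeff (mk3 0 0 3) f) + monomial (mk3 2 1 0) (coeff (mk3 2 1 0) f)
      + monomial (mk3 2 0 1) (coeff (mk3 2 0 1) f) + monomial (mk3 1 2 0) (coeff (mk3 1 2 0) f)
      + monomial (mk3 0 2 1) (coeff (mk3 0 2 1) f) + monomial (mk3 1 0 2) (coeff (mk3 1 0 2) f)
      + monomial (mk3 0 1 2) (coeff (mk3 0 1 2) f)
      + monomial (mk3 1 1 1) (coeff (mk3 1 1 1) f) := by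
  ext m
  have hm : mk3 (m 0) (m 1) (m 2) = m := mk3_self m
  simp only [coeff_add, coeff_monomial, mk3_eq_iff]
  by_cases h3 : m 0 + m 1 + m 2 = 3
  · rcases tri_cases _ _ _ h3 with
      ⟨h0, h1, h2⟩ | ⟨h0, h1, h2⟩ | ⟨h0, h1, h2⟩ | ⟨h0, h1, h2⟩ | ⟨h0, h1, h2⟩ |
      ⟨h0, h1, h2⟩ | ⟨h0, h1, h2⟩ | ⟨h0, h1, h2⟩ | ⟨h0, h1, h2⟩ | ⟨h0, h1, h2⟩ <;>
    · simp only [← h0, ← h1, ← h2] at hm ⊢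
      rw [← hm]
      norm_num
  · have h0 : coeff m f = 0 := hf.coeff_eq_zero (by rw [degree_fin3]; omega)
    rw [h0]
    rw [if_neg (show ¬(3 = m 0 ∧ 0 = m 1 ∧ 0 = m 2) by omega), if_neg (show ¬(0 = m 0 ∧ 3 = m 1 ∧ 0 = m 2) by omega), if_neg (show ¬(0 = m 0 ∧ 0 = m 1 ∧ 3 = m 2) by omega), if_neg (show ¬(2 = m 0 ∧ 1 = m 1 ∧ 0 = m 2) by omega), if_neg (show ¬(2 = m 0 ∧ 0 = m 1 ∧ 1 = m 2) by omega), if_neg (show ¬(1 = m 0 ∧ 2 = m 1 ∧ 0 = m 2) by omega), if_neg (show ¬(0 = m 0 ∧ 2 = m 1 ∧ 1 = m 2) by omega), if_neg (show ¬(1 = m 0 ∧ 0 = m 1 ∧ 2 = m 2) by omega), if_neg (show ¬(0 = m 0 ∧ 1 = m 1 ∧ 2 = m 2) by omega), if_neg (show ¬(1 = m 0 ∧ 1 = m 1 ∧ 1 = m 2) by omega)]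
    norm_num

lemma mk3_inj {i j k i' j' k' : ℕ} :
    mk3 i j k = mk3 i' j' k' ↔ i = i' ∧ j = j' ∧ k = k' := by
  rw [mk3_eq_iff, mk3_apply0, mk3_apply1, mk3_apply2]

lemma monomial_mk3 (i j k : ℕ) (a : ℂ) :
    (monomial (mk3 i j k) a : MvPolynomial (Fin 3) ℂ) = C a * X 0 ^ i * X 1 ^ j * X 2 ^ k := by
  rw [X_pow_eq_monomial, X_pow_eq_monomial, X_pow_eq_monomial, C_mul_monomial,
    monomial_mul, monomial_mul]
  simp [mk3, add_assoc]

lemma pd00 (a b c d e p q r s t : ℂ) :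
    pderiv 0 (pderiv (0 : Fin 3) (C a * X 0 ^ 3 + C b * X 1 ^ 3 + C c * X 2 ^ 3 + C d * X 0 ^ 2 * X 1 + C e * X 0 ^ 2 * X 2 + C p * X 0 * X 1 ^ 2 + C q * X 1 ^ 2 * X 2 + C r * X 0 * X 2 ^ 2 + C s * X 1 * X 2 ^ 2 + C t * X 0 * X 1 * X 2)) = C (6*a) * X 0 + C (2*d) * X 1 + C (2*e) * X 2 := by
  simp only [map_add, pderiv_C_mul, pderiv_mul, pderiv_pow,
    pderiv_X_self, pderiv_X_of_ne (show (1:Fin 3) ≠ 0 by decide),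
    pderiv_X_of_ne (show (2:Fin 3) ≠ 0 by decide),
    pderiv_X_of_ne (show (0:Fin 3) ≠ 1 by decide),
    pderiv_X_of_ne (show (2:Fin 3) ≠ 1 by decide),
    pderiv_X_of_ne (show (0:Fin 3) ≠ 2 by decide),
    pderiv_X_of_ne (show (1:Fin 3) ≠ 2 by decide),
    pderiv_C, pderiv_two, pderiv_three, map_ofNat, Nat.cast_ofNat, map_mul,
    map_zero, zero_mul, mul_zero, add_zero, zero_add, mul_one, one_mul]
  ring

lemma pd01 (a b c d e p q r s t : ℂ) :
    pderiv 0 (pderiv (1 : Fin 3) (C a * X 0 ^ 3 + C b * X 1 ^ 3 + C c * X 2 ^ 3 + C d * X 0 ^ 2 * X 1 + C e * X 0 ^ 2 * X 2 + C p * X 0 * X 1 ^ 2 + C q * X 1 ^ 2 * X 2 + C r * X 0 * X 2 ^ 2 + C s * X 1 * X 2 ^ 2 + C t * X 0 * X 1 * X 2)) = C (2*d) * X 0 + C (2*p) * X 1 + C t * X 2 := by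
  simp only [map_add, pderiv_C_mul, pderiv_mul, pderiv_pow,
    pderiv_X_self, pderiv_X_of_ne (show (1:Fin 3) ≠ 0 by decide),
    pderiv_X_of_ne (show (2:Fin 3) ≠ 0 by decide),
    pderiv_X_of_ne (show (0:Fin 3) ≠ 1 by decide),
    pderiv_X_of_ne (show (2:Fin 3) ≠ 1 by decide),
    pderiv_X_of_ne (show (0:Fin 3) ≠ 2 by decide),
    pderiv_X_of_ne (show (1:Fin 3) ≠ 2 by decide),
    pderiv_C, pderiv_two, pderiv_three, map_ofNat, Nat.cast_ofNat, map_mul,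
    map_zero, zero_mul, mul_zero, add_zero, zero_add, mul_one, one_mul]
  ring

lemma pd02 (a b c d e p q r s t : ℂ) :
    pderiv 0 (pderiv (2 : Fin 3) (C a * X 0 ^ 3 + C b * X 1 ^ 3 + C c * X 2 ^ 3 + C d * X 0 ^ 2 * X 1 + C e * X 0 ^ 2 * X 2 + C p * X 0 * X 1 ^ 2 + C q * X 1 ^ 2 * X 2 + C r * X 0 * X 2 ^ 2 + C s * X 1 * X 2 ^ 2 + C t * X 0 * X 1 * X 2)) = C (2*e) * X 0 + C t * X 1 + C (2*r) * X 2 := by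
  simp only [map_add, pderiv_C_mul, pderiv_mul, pderiv_pow,
    pderiv_X_self, pderiv_X_of_ne (show (1:Fin 3) ≠ 0 by decide),
    pderiv_X_of_ne (show (2:Fin 3) ≠ 0 by decide),
    pderiv_X_of_ne (show (0:Fin 3) ≠ 1 by decide),
    pderiv_X_of_ne (show (2:Fin 3) ≠ 1 by decide),
    pderiv_X_of_ne (show (0:Fin 3) ≠ 2 by decide),
    pderiv_X_of_ne (show (1:Fin 3) ≠ 2 by decide),
    pderiv_C, pderiv_two, pderiv_three, map_ofNat, Nat.cast_ofNat, map_mul,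
    map_zero, zero_mul, mul_zero, add_zero, zero_add, mul_one, one_mul]
  ring

lemma pd10 (a b c d e p q r s t : ℂ) :
    pderiv 1 (pderiv (0 : Fin 3) (C a * X 0 ^ 3 + C b * X 1 ^ 3 + C c * X 2 ^ 3 + C d * X 0 ^ 2 * X 1 + C e * X 0 ^ 2 * X 2 + C p * X 0 * X 1 ^ 2 + C q * X 1 ^ 2 * X 2 + C r * X 0 * X 2 ^ 2 + C s * X 1 * X 2 ^ 2 + C t * X 0 * X 1 * X 2)) = C (2*d) * X 0 + C (2*p) * X 1 + C t * X 2 := by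
  simp only [map_add, pderiv_C_mul, pderiv_mul, pderiv_pow,
    pderiv_X_self, pderiv_X_of_ne (show (1:Fin 3) ≠ 0 by decide),
    pderiv_X_of_ne (show (2:Fin 3) ≠ 0 by decide),
    pderiv_X_of_ne (show (0:Fin 3) ≠ 1 by decide),
    pderiv_X_of_ne (show (2:Fin 3) ≠ 1 by decide),
    pderiv_X_of_ne (show (0:Fin 3) ≠ 2 by decide),
    pderiv_X_of_ne (show (1:Fin 3) ≠ 2 by decide),
    pderiv_C, pderiv_two, pderiv_three, map_ofNat, Nat.cast_ofNat, map_mul,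
    map_zero, zero_mul, mul_zero, add_zero, zero_add, mul_one, one_mul]
  ring

lemma pd11 (a b c d e p q r s t : ℂ) :
    pderiv 1 (pderiv (1 : Fin 3) (C a * X 0 ^ 3 + C b * X 1 ^ 3 + C c * X 2 ^ 3 + C d * X 0 ^ 2 * X 1 + C e * X 0 ^ 2 * X 2 + C p * X 0 * X 1 ^ 2 + C q * X 1 ^ 2 * X 2 + C r * X 0 * X 2 ^ 2 + C s * X 1 * X 2 ^ 2 + C t * X 0 * X 1 * X 2)) = C (2*p) * X 0 + C (6*b) * X 1 + C (2*q) * X 2 := by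
  simp only [map_add, pderiv_C_mul, pderiv_mul, pderiv_pow,
    pderiv_X_self, pderiv_X_of_ne (show (1:Fin 3) ≠ 0 by decide),
    pderiv_X_of_ne (show (2:Fin 3) ≠ 0 by decide),
    pderiv_X_of_ne (show (0:Fin 3) ≠ 1 by decide),
    pderiv_X_of_ne (show (2:Fin 3) ≠ 1 by decide),
    pderiv_X_of_ne (show (0:Fin 3) ≠ 2 by decide),
    pderiv_X_of_ne (show (1:Fin 3) ≠ 2 by decide),
    pderiv_C, pderiv_two, pderiv_three, map_ofNat, Nat.cast_ofNat, map_mul,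
    map_zero, zero_mul, mul_zero, add_zero, zero_add, mul_one, one_mul]
  ring

lemma pd12 (a b c d e p q r s t : ℂ) :
    pderiv 1 (pderiv (2 : Fin 3) (C a * X 0 ^ 3 + C b * X 1 ^ 3 + C c * X 2 ^ 3 + C d * X 0 ^ 2 * X 1 + C e * X 0 ^ 2 * X 2 + C p * X 0 * X 1 ^ 2 + C q * X 1 ^ 2 * X 2 + C r * X 0 * X 2 ^ 2 + C s * X 1 * X 2 ^ 2 + C t * X 0 * X 1 * X 2)) = C t * X 0 + C (2*q) * X 1 + C (2*s) * X 2 := by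
  simp only [map_add, pderiv_C_mul, pderiv_mul, pderiv_pow,
    pderiv_X_self, pderiv_X_of_ne (show (1:Fin 3) ≠ 0 by decide),
    pderiv_X_of_ne (show (2:Fin 3) ≠ 0 by decide),
    pderiv_X_of_ne (show (0:Fin 3) ≠ 1 by decide),
    pderiv_X_of_ne (show (2:Fin 3) ≠ 1 by decide),
    pderiv_X_of_ne (show (0:Fin 3) ≠ 2 by decide),
    pderiv_X_of_ne (show (1:Fin 3) ≠ 2 by decide),
    pderiv_C, pderiv_two, pderiv_three, map_ofNat, Nat.cast_ofNat, map_mul,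
    map_zero, zero_mul, mul_zero, add_zero, zero_add, mul_one, one_mul]
  ring

lemma pd20 (a b c d e p q r s t : ℂ) :
    pderiv 2 (pderiv (0 : Fin 3) (C a * X 0 ^ 3 + C b * X 1 ^ 3 + C c * X 2 ^ 3 + C d * X 0 ^ 2 * X 1 + C e * X 0 ^ 2 * X 2 + C p * X 0 * X 1 ^ 2 + C q * X 1 ^ 2 * X 2 + C r * X 0 * X 2 ^ 2 + C s * X 1 * X 2 ^ 2 + C t * X 0 * X 1 * X 2)) = C (2*e) * X 0 + C t * X 1 + C (2*r) * X 2 := by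
  simp only [map_add, pderiv_C_mul, pderiv_mul, pderiv_pow,
    pderiv_X_self, pderiv_X_of_ne (show (1:Fin 3) ≠ 0 by decide),
    pderiv_X_of_ne (show (2:Fin 3) ≠ 0 by decide),
    pderiv_X_of_ne (show (0:Fin 3) ≠ 1 by decide),
    pderiv_X_of_ne (show (2:Fin 3) ≠ 1 by decide),
    pderiv_X_of_ne (show (0:Fin 3) ≠ 2 by decide),
    pderiv_X_of_ne (show (1:Fin 3) ≠ 2 by decide),
    pderiv_C, pderiv_two, pderiv_three, map_ofNat, Nat.cast_ofNat, map_mul,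
    map_zero, zero_mul, mul_zero, add_zero, zero_add, mul_one, one_mul]
  ring

lemma pd21 (a b c d e p q r s t : ℂ) :
    pderiv 2 (pderiv (1 : Fin 3) (C a * X 0 ^ 3 + C b * X 1 ^ 3 + C c * X 2 ^ 3 + C d * X 0 ^ 2 * X 1 + C e * X 0 ^ 2 * X 2 + C p * X 0 * X 1 ^ 2 + C q * X 1 ^ 2 * X 2 + C r * X 0 * X 2 ^ 2 + C s * X 1 * X 2 ^ 2 + C t * X 0 * X 1 * X 2)) = C t * X 0 + C (2*q) * X 1 + C (2*s) * X 2 := by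
  simp only [map_add, pderiv_C_mul, pderiv_mul, pderiv_pow,
    pderiv_X_self, pderiv_X_of_ne (show (1:Fin 3) ≠ 0 by decide),
    pderiv_X_of_ne (show (2:Fin 3) ≠ 0 by decide),
    pderiv_X_of_ne (show (0:Fin 3) ≠ 1 by decide),
    pderiv_X_of_ne (show (2:Fin 3) ≠ 1 by decide),
    pderiv_X_of_ne (show (0:Fin 3) ≠ 2 by decide),
    pderiv_X_of_ne (show (1:Fin 3) ≠ 2 by decide),
    pderiv_C, pderiv_two, pderiv_three, map_ofNat, Nat.cast_ofNat, map_mul,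
    map_zero, zero_mul, mul_zero, add_zero, zero_add, mul_one, one_mul]
  ring

lemma pd22 (a b c d e p q r s t : ℂ) :
    pderiv 2 (pderiv (2 : Fin 3) (C a * X 0 ^ 3 + C b * X 1 ^ 3 + C c * X 2 ^ 3 + C d * X 0 ^ 2 * X 1 + C e * X 0 ^ 2 * X 2 + C p * X 0 * X 1 ^ 2 + C q * X 1 ^ 2 * X 2 + C r * X 0 * X 2 ^ 2 + C s * X 1 * X 2 ^ 2 + C t * X 0 * X 1 * X 2)) = C (2*r) * X 0 + C (2*s) * X 1 + C (6*c) * X 2 := by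
  simp only [map_add, pderiv_C_mul, pderiv_mul, pderiv_pow,
    pderiv_X_self, pderiv_X_of_ne (show (1:Fin 3) ≠ 0 by decide),
    pderiv_X_of_ne (show (2:Fin 3) ≠ 0 by decide),
    pderiv_X_of_ne (show (0:Fin 3) ≠ 1 by decide),
    pderiv_X_of_ne (show (2:Fin 3) ≠ 1 by decide),
    pderiv_X_of_ne (show (0:Fin 3) ≠ 2 by decide),
    pderiv_X_of_ne (show (1:Fin 3) ≠ 2 by decide),
    pderiv_C, pderiv_two, pderiv_three, map_ofNat, Nat.cast_ofNat, map_mul,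
    map_zero, zero_mul, mul_zero, add_zero, zero_add, mul_one, one_mul]
  ring

set_option maxHeartbeats 2000000 in
lemma hess_form (a b c d e p q r s t : ℂ) :
    hessDet (n := 3) (C a * X 0 ^ 3 + C b * X 1 ^ 3 + C c * X 2 ^ 3 + C d * X 0 ^ 2 * X 1 + C e * X 0 ^ 2 * X 2 + C p * X 0 * X 1 ^ 2 + C q * X 1 ^ 2 * X 2 + C r * X 0 * X 2 ^ 2 + C s * X 1 * X 2 ^ 2 + C t * X 0 * X 1 * X 2) =
      monomial (mk3 3 0 0) (24*a*p*r + (-6)*a*t^2 + (-8)*d^2*r + 8*d*e*t + (-8)*e^2*p) +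
      monomial (mk3 0 3 0) (24*b*d*s + (-6)*b*t^2 + (-8)*d*q^2 + (-8)*p^2*s + 8*p*q*t) +
      monomial (mk3 0 0 3) (24*c*e*q + (-6)*c*t^2 + (-8)*e*s^2 + (-8)*q*r^2 + 8*r*s*t) +
      monomial (mk3 2 1 0) (72*a*b*r + 24*a*p*s + (-24)*a*q*t + (-24)*b*e^2 + (-8)*d^2*s + 16*d*e*q + (-8)*d*p*r + 2*d*t^2) +
      monomial (mk3 2 0 1) (72*a*c*p + 24*a*q*r + (-24)*a*s*t + (-24)*c*d^2 + 16*d*e*s + (-8)*e^2*q + (-8)*e*p*r + 2*e*t^2) +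
      monomial (mk3 1 2 0) (72*a*b*s + (-24)*a*q^2 + 24*b*d*r + (-24)*b*e*t + (-8)*d*p*s + 16*e*p*q + (-8)*p^2*r + 2*p*t^2) +
      monomial (mk3 0 2 1) (72*b*c*d + 24*b*e*s + (-24)*b*r*t + (-24)*c*p^2 + (-8)*d*q*s + (-8)*e*q^2 + 16*p*q*r + 2*q*t^2) +
      monomial (mk3 1 0 2) (72*a*c*q + (-24)*a*s^2 + (-24)*c*d*t + 24*c*e*p + 16*d*r*s + (-8)*e*q*r + (-8)*p*r^2 + 2*r*t^2) +
      monomial (mk3 0 1 2) (72*b*c*e + (-24)*b*r^2 + 24*c*d*q + (-24)*c*p*t + (-8)*d*s^2 + (-8)*e*q*s + 16*p*r*s + 2*s*t^2) +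
      monomial (mk3 1 1 1) (216*a*b*c + (-24)*a*q*s + (-24)*b*e*r + (-24)*c*d*p + 24*d*q*r + (-8)*d*s*t + 24*e*p*s + (-8)*e*q*t + (-8)*p*r*t + 2*t^3) := by
  unfold hessDet
  rw [Matrix.det_fin_three]
  simp only [Matrix.of_apply]
  rw [pd00, pd01, pd02, pd10, pd11, pd12, pd20, pd21, pd22]
  simp only [monomial_mk3, map_add, map_mul, map_neg, map_pow, map_ofNat]
  ring

/-- If `f ∈ ℂ[x_1,x_2,x_3]` is homogeneous of degree `3` and `H(f) = α·x_1x_2x_3` with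
`α ≠ 0`, then either `f = a_1x_1^3 + a_2x_2^3 + a_3x_3^3` with `a_1a_2a_3 ≠ 0`, or
`f = a·x_1x_2x_3` with `a ≠ 0`. -/

theorem ternary_cubic_classification (f : MvPolynomial (Fin 3) ℂ) (hf : f.IsHomogeneous 3)
    (α : ℂ) (hα : α ≠ 0) (hH : hessDet f = C α * (X 0 * X 1 * X 2)) :
    (∃ a₁ a₂ a₃ : ℂ, a₁ * a₂ * a₃ ≠ 0 ∧
        f = C a₁ * X 0 ^ 3 + C a₂ * X 1 ^ 3 + C a₃ * X 2 ^ 3) ∨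
    (∃ a : ℂ, a ≠ 0 ∧ f = C a * (X 0 * X 1 * X 2)) := by
  obtain ⟨a, b, c, d, e, p, q, r, s, t, hfe⟩ :
      ∃ a b c d e p q r s t : ℂ, f = C a * X 0 ^ 3 + C b * X 1 ^ 3 + C c * X 2 ^ 3 + C d * X 0 ^ 2 * X 1 + C e * X 0 ^ 2 * X 2 + C p * X 0 * X 1 ^ 2 + C q * X 1 ^ 2 * X 2 + C r * X 0 * X 2 ^ 2 + C s * X 1 * X 2 ^ 2 + C t * X 0 * X 1 * X 2 := by
    refine ⟨coeff (mk3 3 0 0) f, coeff (mk3 0 3 0) f, coeff (mk3 0 0 3) f, coeff (mk3 2 1 0) f, coeff (mk3 2 0 1) f, coeff (mk3 1 2 0) f, coeff (mk3 0 2 1) f, coeff (mk3 1 0 2) f, coeff (mk3 0 1 2) f, coeff (mk3 1 1 1) f, ?_⟩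
    conv_lhs => rw [cubic_decomp f hf]
    simp only [monomial_mk3, pow_zero, pow_one, mul_one, one_mul]
  rw [hfe] at hH
  rw [hess_form a b c d e p q r s t] at hH
  rw [show (C α * (X 0 * X 1 * X 2) : MvPolynomial (Fin 3) ℂ) = monomial (mk3 1 1 1) α by
    rw [monomial_mk3]; ring] at hH
  have h300 := congrArg (coeff (mk3 3 0 0)) hH
  have h030 := congrArg (coeff (mk3 0 3 0)) hH
  have h003 := congrArg (coeff (mk3 0 0 3)) hH
  have h210 := congrArg (coeff (mk3 2 1 0)) hH
  have h201 := congrArg (coeff (mk3 2 0 1)) hH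
  have h120 := congrArg (coeff (mk3 1 2 0)) hH
  have h021 := congrArg (coeff (mk3 0 2 1)) hH
  have h102 := congrArg (coeff (mk3 1 0 2)) hH
  have h012 := congrArg (coeff (mk3 0 1 2)) hH
  have h111 := congrArg (coeff (mk3 1 1 1)) hH
  simp only [coeff_add, coeff_monomial, mk3_inj] at h300 h030 h003 h210 h201 h120 h021 h102 h012 h111
  norm_num at h300 h030 h003 h210 h201 h120 h021 h102 h012 h111
  have hd0 : d = 0 := by
    have hz : α * d = 0 := by linear_combination (-3*q)*h300 + t*h210 + p*h201 + (-e)*h120 + (3*a)*h021 + (-d)*h111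
    rcases mul_eq_zero.mp hz with h' | h'
    · exact absurd h' hα
    · exact h'
  have he0 : e = 0 := by
    have hz : α * e = 0 := by linear_combination (-3*s)*h300 + r*h210 + t*h201 + (-d)*h102 + (3*a)*h012 + (-e)*h111
    rcases mul_eq_zero.mp hz with h' | h'
    · exact absurd h' hα
    · exact h'
  have hp0 : p = 0 := by
    have hz : α * p = 0 := by linear_combination (-q)*h210 + (3*b)*h201 + t*h120 + (-3*e)*h030 + d*h021 + (-p)*h111
    rcases mul_eq_zero.mp hz with h' | h'
    · exact absurd h' hα
    · exact h'
  have hq0 : q = 0 := by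
    have hz : α * q = 0 := by linear_combination s*h120 + (3*b)*h102 + (-3*r)*h030 + t*h021 + (-p)*h012 + (-q)*h111
    rcases mul_eq_zero.mp hz with h' | h'
    · exact absurd h' hα
    · exact h'
  have hr0 : r = 0 := by
    have hz : α * r = 0 := by linear_combination (3*c)*h210 + (-s)*h201 + t*h102 + e*h012 + (-3*d)*h003 + (-r)*h111
    rcases mul_eq_zero.mp hz with h' | h'
    · exact absurd h' hα
    · exact h'
  have hs0 : s = 0 := by
    have hz : α * s = 0 := by linear_combination (3*c)*h120 + q*h102 + (-r)*h021 + t*h012 + (-3*p)*h003 + (-s)*h111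
    rcases mul_eq_zero.mp hz with h' | h'
    · exact absurd h' hα
    · exact h'
  by_cases ht : t = 0
  · left
    refine ⟨a, b, c, ?_, ?_⟩
    · intro habc
      apply hα
      have h216 : 216*(a*b*c) = α := by
        linear_combination h111 + (24*c*p - 24*q*r + 8*s*t)*hd0 + (24*b*r - 24*p*s + 8*q*t)*he0
          + (24*a*s)*hq0 + (8*p*r - 2*t^2)*ht
      linear_combination (-1)*h216 + 216*habc
    · rw [hfe, hd0, he0, hp0, hq0, hr0, hs0, ht]
      simp only [map_zero, zero_mul, add_zero, zero_add]
  · right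
    have ht2 : t^2 ≠ 0 := pow_ne_zero 2 ht
    have ha0 : a = 0 := by
      have hz : a * t^2 = 0 := by
        linear_combination (-1/6)*h300 + (4*a*r)*hp0 + (-(4/3)*d*r + (4/3)*e*t)*hd0
          + (-(4/3)*e*p)*he0
      exact (mul_eq_zero.mp hz).resolve_right ht2
    have hb0 : b = 0 := by
      have hz : b * t^2 = 0 := by
        linear_combination (-1/6)*h030 + (4*b*s - (4/3)*q^2)*hd0 + (-(4/3)*p*s + (4/3)*q*t)*hp0
      exact (mul_eq_zero.mp hz).resolve_right ht2
    have hc0 : c = 0 := by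
      have hz : c * t^2 = 0 := by
        linear_combination (-1/6)*h003 + (4*c*q - (4/3)*s^2)*he0 + (-(4/3)*q*r + (4/3)*s*t)*hr0
      exact (mul_eq_zero.mp hz).resolve_right ht2
    refine ⟨t, ht, ?_⟩
    rw [hfe, ha0, hb0, hc0, hd0, he0, hp0, hq0, hr0, hs0]
    simp only [map_zero, zero_mul, add_zero, zero_add]
    ring
end

section
/- Let d ≥ 3 be odd. There is no singular homogeneous polynomial f ∈ ℂ[x_1,x_2] of degree d such that H(f) = α·(x_1x_2)^{d−2} for some nonzero α ∈ ℂ. That is, if f is homogeneous of degree d (d odd, d ≥ 3) with H(f) = α(x_1x_2)^{d−2} ≠ 0, then there is no point (a,b) ∈ ℂ² \ {(0,0)} at which both partial derivatives ∂f/∂x_1 and ∂f/∂x_2 vanish. -/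
open MvPolynomial

lemma fin2_eq (u : Fin 2 →₀ ℕ) : u = Finsupp.single 0 (u 0) + Finsupp.single 1 (u 1) := by
  ext i
  fin_cases i <;> simp [Finsupp.single_apply]

lemma degree_fin2 (u : Fin 2 →₀ ℕ) : u.degree = u 0 + u 1 := by
  rw [Finsupp.degree_eq_sum, Fin.sum_univ_two]

lemma weight_one_eq_degree : Finsupp.weight (1 : Fin 2 → ℕ) = Finsupp.degree := by
  rw [Finsupp.degree_eq_weight_one]; rfl

lemma coeff_pderiv' {σ : Type*} [DecidableEq σ] (i : σ) (f : MvPolynomial σ ℂ) (u : σ →₀ ℕ) :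
    coeff u (pderiv i f) = (u i + 1 : ℕ) * coeff (u + Finsupp.single i 1) f := by
  induction f using MvPolynomial.induction_on' with
  | monomial s a =>
    rw [pderiv_monomial, coeff_monomial, coeff_monomial]
    by_cases h : s = u + Finsupp.single i 1
    · subst h
      rw [if_pos]
      · simp [Finsupp.add_apply]; push_cast; ring
      · ext j; by_cases hj : j = i <;> simp [hj]
    · rw [if_neg h]
      by_cases h2 : s - Finsupp.single i 1 = u
      · rw [if_pos h2]
        have : s i = 0 := by
          by_contra hs
          apply h
          rw [← h2]
          ext j
          by_cases hj : j = i
          · subst hj; simp [Finsupp.tsub_apply]; omega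
          · have hij : ¬ i = j := fun hh => hj hh.symm
            simp [hij, Finsupp.tsub_apply, Finsupp.single_apply]
        simp [this]
      · simp [h2]
  | add p q hp hq => simp [hp, hq, mul_add]

lemma IsHomog.pderiv2 {f : MvPolynomial (Fin 2) ℂ} {n : ℕ} (hf : f.IsHomogeneous n) (i : Fin 2) :
    (pderiv i f).IsHomogeneous (n - 1) := by
  intro u hu
  rw [weight_one_eq_degree, degree_fin2]
  rw [coeff_pderiv'] at hu
  have h2 : coeff (u + Finsupp.single i 1) f ≠ 0 := fun h => by simp [h] at hu
  have h3 := hf h2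
  rw [weight_one_eq_degree, degree_fin2] at h3
  simp only [Finsupp.add_apply, Finsupp.single_apply] at h3
  fin_cases i <;> simp at h3 <;> omega

lemma euler {f : MvPolynomial (Fin 2) ℂ} {n : ℕ} (hf : f.IsHomogeneous n) :
    (n : ℂ) • f = pderiv 0 f * X 0 + pderiv 1 f * X 1 := by
  ext u
  rw [coeff_smul, coeff_add, coeff_mul_X', coeff_mul_X']
  have key : ∀ i : Fin 2, (if i ∈ u.support then coeff (u - Finsupp.single i 1) (pderiv i f) else 0)
      = (u i : ℂ) * coeff u f := by
    intro i
    by_cases h : i ∈ u.support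
    · rw [if_pos h, coeff_pderiv']
      have hui : u i ≠ 0 := Finsupp.mem_support_iff.mp h
      have h4 : u - Finsupp.single i 1 + Finsupp.single i 1 = u := by
        ext j
        by_cases hj : i = j
        · subst hj; simp [Finsupp.tsub_apply]; omega
        · simp [hj, Finsupp.tsub_apply, Finsupp.single_apply]
      rw [h4]
      have h5 : ((u - Finsupp.single i 1 : Fin 2 →₀ ℕ) i + 1 : ℕ) = u i := by
        rw [Finsupp.tsub_apply]
        simp
        omega
      rw [h5]
    · rw [if_neg h]
      have : u i = 0 := Finsupp.notMem_support_iff.mp h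
      simp [this]
  rw [key 0, key 1]
  by_cases hc : coeff u f = 0
  · simp [hc]
  · have := hf hc
    rw [weight_one_eq_degree, degree_fin2] at this
    rw [smul_eq_mul, ← this]
    push_cast
    ring

lemma eval_homog {g : MvPolynomial (Fin 2) ℂ} {k : ℕ} (hg : g.IsHomogeneous k)
    (p : Fin 2 → ℂ) (hp1 : p 1 = 0) :
    eval p g = coeff (Finsupp.single 0 k) g * (p 0) ^ k := by
  rw [eval_eq]
  rw [Finset.sum_eq_single (Finsupp.single 0 k)]
  · rcases Nat.eq_zero_or_pos k with hk | hk
    · subst hk; simp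
    · rw [Finsupp.support_single_ne_zero _ (Nat.pos_iff_ne_zero.mp hk)]
      simp
  · intro b hb hne
    have hcb : coeff b g ≠ 0 := by rwa [MvPolynomial.mem_support_iff] at hb
    have hdb := hg hcb
    rw [weight_one_eq_degree, degree_fin2] at hdb
    have hb1 : b 1 ≠ 0 := by
      intro h0
      apply hne
      rw [fin2_eq b, h0]
      simp
      congr 1
      omega
    have h1s : (1 : Fin 2) ∈ b.support := Finsupp.mem_support_iff.mpr hb1
    rw [Finset.prod_eq_zero h1s (by rw [hp1]; exact zero_pow hb1), mul_zero]
  · intro h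
    rw [MvPolynomial.notMem_support_iff.mp h, zero_mul]

lemma hessDet_eq (f : MvPolynomial (Fin 2) ℂ) :
    hessDet f = pderiv 0 (pderiv 0 f) * pderiv 1 (pderiv 1 f)
      - pderiv 0 (pderiv 1 f) * pderiv 1 (pderiv 0 f) := by
  rw [hessDet, Matrix.det_fin_two]
  rfl

lemma rhs_eq (d : ℕ) (α : ℂ) :
    C α * (X 0 * X 1 : MvPolynomial (Fin 2) ℂ) ^ (d - 2)
      = monomial (Finsupp.single 0 (d-2) + Finsupp.single 1 (d-2)) α := by
  rw [mul_pow, X_pow_eq_monomial, X_pow_eq_monomial, monomial_mul, C_mul_monomial, one_mul, mul_one]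

lemma app0 (a b : ℕ) : (Finsupp.single (0 : Fin 2) a + Finsupp.single 1 b : Fin 2 →₀ ℕ) 0 = a := by
  simp

lemma app1 (a b : ℕ) : (Finsupp.single (0 : Fin 2) a + Finsupp.single 1 b : Fin 2 →₀ ℕ) 1 = b := by
  simp [Finsupp.single_apply]

set_option maxHeartbeats 1000000 in
lemma hess_rename (f : MvPolynomial (Fin 2) ℂ) :
    hessDet (rename (Equiv.swap (0 : Fin 2) 1) f) = rename (Equiv.swap (0 : Fin 2) 1) (hessDet f) := by
  set e := Equiv.swap (0 : Fin 2) 1 with he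
  have h0 : e 0 = 1 := Equiv.swap_apply_left 0 1
  have h1 : e 1 = 0 := Equiv.swap_apply_right 0 1
  have pd : ∀ (x i : Fin 2) (g : MvPolynomial (Fin 2) ℂ), e x = i →
      pderiv i (rename e g) = rename e (pderiv x g) := by
    rintro x i g rfl
    exact pderiv_rename e.injective x g
  have r0 : ∀ g : MvPolynomial (Fin 2) ℂ, pderiv (0 : Fin 2) (rename (⇑e) g) = rename (⇑e) (pderiv 1 g) :=
    fun g => pd 1 0 g h1
  have r1 : ∀ g : MvPolynomial (Fin 2) ℂ, pderiv (1 : Fin 2) (rename (⇑e) g) = rename (⇑e) (pderiv 0 g) :=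
    fun g => pd 0 1 g h0
  rw [hessDet_eq, hessDet_eq]
  rw [r0, r0, r1, r1, r0, r1]
  rw [mul_comm (rename (⇑e) ((pderiv 1) ((pderiv 1) f))), mul_comm (rename (⇑e) ((pderiv 1) ((pderiv 0) f))),
    ← map_mul, ← map_mul, ← map_sub]

set_option maxHeartbeats 3000000 in
lemma key (d : ℕ) (hd : 3 ≤ d) (hodd : Odd d)
    (f : MvPolynomial (Fin 2) ℂ) (hf : f.IsHomogeneous d)
    (α : ℂ) (hα : α ≠ 0) (hH : hessDet f = C α * (X 0 * X 1) ^ (d - 2))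
    (h0 : coeff (Finsupp.single 0 d) f = 0)
    (h1 : coeff (Finsupp.single 0 (d-1) + Finsupp.single 1 1) f = 0) : False := by
  rw [rhs_eq] at hH
  set c : ℕ → ℂ := fun k => coeff (Finsupp.single 0 (d - k) + Finsupp.single 1 k) f with hcdef
  have hdeg : ∀ u : Fin 2 →₀ ℕ, coeff u f ≠ 0 → u 0 + u 1 = d := by
    intro u hu
    have := hf hu
    rw [weight_one_eq_degree, degree_fin2] at this
    exact this
  have hconv : ∀ u : Fin 2 →₀ ℕ, u 0 + u 1 = d → coeff u f = c (u 1) := by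
    intro u hu
    rw [hcdef]
    congr 1
    ext j
    fin_cases j <;> simp [Finsupp.single_apply] <;> omega
  -- existence of a nonzero coefficient
  have hex : ∃ k, c k ≠ 0 := by
    by_contra hall
    push_neg at hall
    have hf0 : f = 0 := by
      ext u
      rcases eq_or_ne (coeff u f) 0 with h | h
      · simpa using h
      · exact absurd (hconv u (hdeg u h) ▸ hall (u 1)) h
    rw [hf0] at hH
    have : (0 : ℂ) = α := by
      have := congrArg (coeff (Finsupp.single 0 (d-2) + Finsupp.single 1 (d-2))) hH
      simpa [hessDet_eq, coeff_monomial] using this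
    exact hα this.symm
  set m := Nat.find hex with hmdef
  have hm : c m ≠ 0 := Nat.find_spec hex
  have hmin : ∀ k, k < m → c k = 0 := fun k hk => not_not.mp (Nat.find_min hex hk)
  have hc0 : c 0 = 0 := by
    rw [hcdef]; simpa using h0
  have hc1 : c 1 = 0 := by rw [hcdef]; exact h1
  have hm2 : 2 ≤ m := by
    rcases Nat.lt_or_ge m 2 with h | h
    · interval_cases m
      · exact absurd hc0 hm
      · exact absurd hc1 hm
    · exact h
  have hmd : m ≤ d := by
    by_contra h
    push_neg at h
    have := hdeg _ hm
    rw [app0, app1] at this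
    omega
  rcases eq_or_lt_of_le hmd with hmeq | hmlt
  · -- m = d : f is a multiple of y^d, so pderiv 0 f = 0 and hessDet f = 0
    have hp0 : pderiv 0 f = 0 := by
      rw [MvPolynomial.eq_zero_iff]
      intro u
      rw [coeff_pderiv']
      rcases eq_or_ne (coeff (u + Finsupp.single 0 1) f) 0 with h | h
      · rw [h, mul_zero]
      · exfalso
        have hdg := hdeg _ h
        have e0' : (u + Finsupp.single 0 1 : Fin 2 →₀ ℕ) 0 = u 0 + 1 := by simp
        have e1' : (u + Finsupp.single 0 1 : Fin 2 →₀ ℕ) 1 = u 1 := by simp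
        rw [e0', e1'] at hdg
        have hcv := hconv _ (by rw [e0', e1']; omega)
        rw [hcv, e1'] at h
        exact h (hmin _ (by omega))
    rw [hessDet_eq, hp0] at hH
    simp only [map_zero, zero_mul, mul_zero, sub_zero] at hH
    have : (0 : ℂ) = α := by
      have := congrArg (coeff (Finsupp.single 0 (d-2) + Finsupp.single 1 (d-2))) hH
      simpa [coeff_monomial] using this
    exact hα this.symm
  · -- main case : 2 ≤ m < d
    set μ : Fin 2 →₀ ℕ := Finsupp.single 0 (2*d - 2*m - 2) + Finsupp.single 1 (2*m - 2) with hμdef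
    have hcm : coeff (Finsupp.single 0 (d - m) + Finsupp.single 1 m) f = c m := by rw [hcdef]
    have char00 : ∀ u v : Fin 2 →₀ ℕ, u + v = μ →
        coeff u (pderiv 0 (pderiv 0 f)) * coeff v (pderiv 1 (pderiv 1 f)) ≠ 0 →
        u 1 = m ∧ v 1 = m - 2 ∧ u 0 = d - 2 - m ∧ v 0 = d - m ∧ m + 2 ≤ d := by
      intro u v huv hne
      simp only [coeff_pderiv'] at hne
      have hu : coeff (u + Finsupp.single 0 1 + Finsupp.single 0 1) f ≠ 0 := by
        intro h; apply hne; rw [h]; ring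
      have hv : coeff (v + Finsupp.single 1 1 + Finsupp.single 1 1) f ≠ 0 := by
        intro h; apply hne; rw [h]; ring
      have hdu := hdeg _ hu
      have hdv := hdeg _ hv
      have du0 : (u + Finsupp.single 0 1 + Finsupp.single 0 1 : Fin 2 →₀ ℕ) 0 = u 0 + 2 := by simp
      have du1 : (u + Finsupp.single 0 1 + Finsupp.single 0 1 : Fin 2 →₀ ℕ) 1 = u 1 := by simp
      have dv0 : (v + Finsupp.single 1 1 + Finsupp.single 1 1 : Fin 2 →₀ ℕ) 0 = v 0 := by simp
      have dv1 : (v + Finsupp.single 1 1 + Finsupp.single 1 1 : Fin 2 →₀ ℕ) 1 = v 1 + 2 := by simp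
      rw [du0, du1] at hdu
      rw [dv0, dv1] at hdv
      have hu1 : m ≤ u 1 := by
        by_contra hlt
        push_neg at hlt
        have := hconv _ (by rw [du0, du1]; omega)
        rw [this, du1] at hu
        exact hu (hmin _ hlt)
      have hv1 : m ≤ v 1 + 2 := by
        by_contra hlt
        push_neg at hlt
        have := hconv _ (by rw [dv0, dv1]; omega)
        rw [this, dv1] at hv
        exact hv (hmin _ hlt)
      have hμ0 : u 0 + v 0 = 2*d - 2*m - 2 := by
        have := DFunLike.congr_fun huv 0
        rw [hμdef] at this
        simpa [app0] using this
      have hμ1 : u 1 + v 1 = 2*m - 2 := by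
        have := DFunLike.congr_fun huv 1
        rw [hμdef] at this
        rw [Finsupp.add_apply, app1] at this
        exact this
      refine ⟨by omega, by omega, by omega, by omega, by omega⟩
    have hP00P11 : coeff μ (pderiv 0 (pderiv 0 f) * pderiv 1 (pderiv 1 f))
        = (((d - m - 1) * (d - m)) * ((m - 1) * m) : ℕ) * (c m * c m) := by
      rcases Nat.lt_or_ge d (m + 2) with hcase | hcase
      · -- no contributing term; both sides are zero
        rw [MvPolynomial.coeff_mul, Finset.sum_eq_zero, show d - m - 1 = 0 from by omega]
        · simp
        · intro b hb
          by_contra hne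
          obtain ⟨_, _, _, _, hge⟩ := char00 b.1 b.2 (Finset.HasAntidiagonal.mem_antidiagonal.mp hb) hne
          omega
      · rw [MvPolynomial.coeff_mul]
        rw [Finset.sum_eq_single ((Finsupp.single 0 (d-2-m) + Finsupp.single 1 m : Fin 2 →₀ ℕ),
            (Finsupp.single 0 (d-m) + Finsupp.single 1 (m-2) : Fin 2 →₀ ℕ))]
        · simp only [coeff_pderiv']
          have m1 : (Finsupp.single 0 (d-2-m) + Finsupp.single 1 m : Fin 2 →₀ ℕ)
              + Finsupp.single 0 1 + Finsupp.single 0 1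
              = Finsupp.single 0 (d - m) + Finsupp.single 1 m := by
            ext j; fin_cases j <;> simp [Finsupp.single_apply] <;> omega
          have m2 : (Finsupp.single 0 (d-m) + Finsupp.single 1 (m-2) : Fin 2 →₀ ℕ)
              + Finsupp.single 1 1 + Finsupp.single 1 1
              = Finsupp.single 0 (d - m) + Finsupp.single 1 m := by
            ext j; fin_cases j <;> simp [Finsupp.single_apply] <;> omega
          rw [m1, m2, hcm]
          have a1 : ((Finsupp.single 0 (d-2-m) + Finsupp.single 1 m : Fin 2 →₀ ℕ)) 0 + 1 = d - m - 1 := by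
            rw [app0]; omega
          have a2 : ((Finsupp.single 0 (d-2-m) + Finsupp.single 1 m : Fin 2 →₀ ℕ)
              + Finsupp.single 0 1 : Fin 2 →₀ ℕ) 0 + 1 = d - m := by
            simp [app0, Finsupp.single_apply]; omega
          have a3 : ((Finsupp.single 0 (d-m) + Finsupp.single 1 (m-2) : Fin 2 →₀ ℕ)) 1 + 1 = m - 1 := by
            rw [app1]; omega
          have a4 : ((Finsupp.single 0 (d-m) + Finsupp.single 1 (m-2) : Fin 2 →₀ ℕ)
              + Finsupp.single 1 1 : Fin 2 →₀ ℕ) 1 + 1 = m := by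
            simp [app1, Finsupp.single_apply]; omega
          rw [a1, a2, a3, a4]
          push_cast
          ring
        · intro b hb hne
          by_contra hzero
          obtain ⟨e1', e2', e3', e4', _⟩ := char00 b.1 b.2 (Finset.HasAntidiagonal.mem_antidiagonal.mp hb) hzero
          apply hne
          have hb1 : b.1 = (Finsupp.single 0 (d-2-m) + Finsupp.single 1 m : Fin 2 →₀ ℕ) := by
            ext j; fin_cases j <;> simp [Finsupp.single_apply, e1', e3']
          have hb2 : b.2 = (Finsupp.single 0 (d-m) + Finsupp.single 1 (m-2) : Fin 2 →₀ ℕ) := by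
            ext j; fin_cases j <;> simp [Finsupp.single_apply, e2', e4']
          exact Prod.ext hb1 hb2
        · intro hmem
          exfalso
          apply hmem
          rw [Finset.HasAntidiagonal.mem_antidiagonal, hμdef]
          ext j; fin_cases j <;> simp [Finsupp.single_apply] <;> omega
    have char01 : ∀ u v : Fin 2 →₀ ℕ, u + v = μ →
        coeff u (pderiv 0 (pderiv 1 f)) * coeff v (pderiv 1 (pderiv 0 f)) ≠ 0 →
        u 1 = m - 1 ∧ v 1 = m - 1 ∧ u 0 = d - m - 1 ∧ v 0 = d - m - 1 := by
      intro u v huv hne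
      simp only [coeff_pderiv'] at hne
      have hu : coeff (u + Finsupp.single 0 1 + Finsupp.single 1 1) f ≠ 0 := by
        intro h; apply hne; rw [h]; ring
      have hv : coeff (v + Finsupp.single 1 1 + Finsupp.single 0 1) f ≠ 0 := by
        intro h; apply hne; rw [h]; ring
      have hdu := hdeg _ hu
      have hdv := hdeg _ hv
      have du0 : (u + Finsupp.single 0 1 + Finsupp.single 1 1 : Fin 2 →₀ ℕ) 0 = u 0 + 1 := by simp
      have du1 : (u + Finsupp.single 0 1 + Finsupp.single 1 1 : Fin 2 →₀ ℕ) 1 = u 1 + 1 := by simp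
      have dv0 : (v + Finsupp.single 1 1 + Finsupp.single 0 1 : Fin 2 →₀ ℕ) 0 = v 0 + 1 := by simp
      have dv1 : (v + Finsupp.single 1 1 + Finsupp.single 0 1 : Fin 2 →₀ ℕ) 1 = v 1 + 1 := by simp
      rw [du0, du1] at hdu
      rw [dv0, dv1] at hdv
      have hu1 : m ≤ u 1 + 1 := by
        by_contra hlt
        push_neg at hlt
        have := hconv _ (by rw [du0, du1]; omega)
        rw [this, du1] at hu
        exact hu (hmin _ hlt)
      have hv1 : m ≤ v 1 + 1 := by
        by_contra hlt
        push_neg at hlt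
        have := hconv _ (by rw [dv0, dv1]; omega)
        rw [this, dv1] at hv
        exact hv (hmin _ hlt)
      have hμ0 : u 0 + v 0 = 2*d - 2*m - 2 := by
        have := DFunLike.congr_fun huv 0
        rw [hμdef] at this
        simpa [app0] using this
      have hμ1 : u 1 + v 1 = 2*m - 2 := by
        have := DFunLike.congr_fun huv 1
        rw [hμdef] at this
        rw [Finsupp.add_apply, app1] at this
        exact this
      refine ⟨by omega, by omega, by omega, by omega⟩
    have hP01P10 : coeff μ (pderiv 0 (pderiv 1 f) * pderiv 1 (pderiv 0 f))
        = (((d - m) * m) * ((d - m) * m) : ℕ) * (c m * c m) := by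
      rw [MvPolynomial.coeff_mul]
      rw [Finset.sum_eq_single ((Finsupp.single 0 (d-m-1) + Finsupp.single 1 (m-1) : Fin 2 →₀ ℕ),
          (Finsupp.single 0 (d-m-1) + Finsupp.single 1 (m-1) : Fin 2 →₀ ℕ))]
      · simp only [coeff_pderiv']
        have m1 : (Finsupp.single 0 (d-m-1) + Finsupp.single 1 (m-1) : Fin 2 →₀ ℕ)
            + Finsupp.single 0 1 + Finsupp.single 1 1
            = Finsupp.single 0 (d - m) + Finsupp.single 1 m := by
          ext j; fin_cases j <;> simp [Finsupp.single_apply] <;> omega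
        have m2 : (Finsupp.single 0 (d-m-1) + Finsupp.single 1 (m-1) : Fin 2 →₀ ℕ)
            + Finsupp.single 1 1 + Finsupp.single 0 1
            = Finsupp.single 0 (d - m) + Finsupp.single 1 m := by
          ext j; fin_cases j <;> simp [Finsupp.single_apply] <;> omega
        rw [m1, m2, hcm]
        have a1 : ((Finsupp.single 0 (d-m-1) + Finsupp.single 1 (m-1) : Fin 2 →₀ ℕ)) 0 + 1 = d - m := by
          rw [app0]; omega
        have a2 : ((Finsupp.single 0 (d-m-1) + Finsupp.single 1 (m-1) : Fin 2 →₀ ℕ)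
            + Finsupp.single 0 1 : Fin 2 →₀ ℕ) 1 + 1 = m := by
          simp [app1, Finsupp.single_apply]; omega
        have a3 : ((Finsupp.single 0 (d-m-1) + Finsupp.single 1 (m-1) : Fin 2 →₀ ℕ)) 1 + 1 = m := by
          rw [app1]; omega
        have a4 : ((Finsupp.single 0 (d-m-1) + Finsupp.single 1 (m-1) : Fin 2 →₀ ℕ)
            + Finsupp.single 1 1 : Fin 2 →₀ ℕ) 0 + 1 = d - m := by
          simp [app0, Finsupp.single_apply]; omega
        rw [a1, a2, a3, a4]
        push_cast
        ring
      · intro b hb hne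
        by_contra hzero
        obtain ⟨e1', e2', e3', e4'⟩ := char01 b.1 b.2 (Finset.HasAntidiagonal.mem_antidiagonal.mp hb) hzero
        apply hne
        have hb1 : b.1 = (Finsupp.single 0 (d-m-1) + Finsupp.single 1 (m-1) : Fin 2 →₀ ℕ) := by
          ext j; fin_cases j <;> simp [Finsupp.single_apply, e1', e3']
        have hb2 : b.2 = (Finsupp.single 0 (d-m-1) + Finsupp.single 1 (m-1) : Fin 2 →₀ ℕ) := by
          ext j; fin_cases j <;> simp [Finsupp.single_apply, e2', e4']
        exact Prod.ext hb1 hb2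
      · intro hmem
        exfalso
        apply hmem
        rw [Finset.HasAntidiagonal.mem_antidiagonal, hμdef]
        ext j; fin_cases j <;> simp [Finsupp.single_apply] <;> omega
    have hμne : (Finsupp.single (0:Fin 2) (d-2) + Finsupp.single 1 (d-2)) ≠ μ := by
      intro hcontra
      have hv : (Finsupp.single (0:Fin 2) (d-2) + Finsupp.single 1 (d-2) : Fin 2 →₀ ℕ) 1 = μ 1 := by
        rw [hcontra]
      rw [app1, hμdef, app1] at hv
      obtain ⟨t, ht⟩ := hodd
      omega
    have hcoeff : coeff μ (hessDet f) = 0 := by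
      rw [hH, coeff_monomial, if_neg hμne]
    rw [hessDet_eq, coeff_sub, hP00P11, hP01P10] at hcoeff
    have hAB : (((d - m - 1) * (d - m)) * ((m - 1) * m) : ℕ)
        = (((d - m) * m) * ((d - m) * m) : ℕ) := by
      have hcc : c m * c m ≠ 0 := mul_ne_zero hm hm
      rw [← sub_mul] at hcoeff
      rcases mul_eq_zero.mp hcoeff with h | h
      · exact_mod_cast sub_eq_zero.mp h
      · exact absurd h hcc
    obtain ⟨a', ha'⟩ : ∃ a', d - m = a' + 1 := ⟨d - m - 1, by omega⟩
    obtain ⟨m2, hm'⟩ : ∃ m2, m = m2 + 2 := ⟨m - 2, by omega⟩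
    rw [ha', hm', show (m2 + 2 - 1) = m2 + 1 from by omega,
      show (a' + 1 - 1) = a' from by omega] at hAB
    have hpos : 0 < (a' + 1) * (m2 + 2) := by positivity
    have hlt : a' * (m2 + 1) < (a' + 1) * (m2 + 2) := by nlinarith
    apply absurd hAB
    apply Nat.ne_of_lt
    calc a' * (a' + 1) * ((m2 + 1) * (m2 + 2))
        = a' * (m2 + 1) * ((a' + 1) * (m2 + 2)) := by ring
      _ < ((a' + 1) * (m2 + 2)) * ((a' + 1) * (m2 + 2)) :=
          Nat.mul_lt_mul_of_lt_of_le hlt le_rfl hpos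
      _ = (a' + 1) * (m2 + 2) * ((a' + 1) * (m2 + 2)) := by ring

lemma key2 (d : ℕ) (hd : 3 ≤ d) (hodd : Odd d)
    (f : MvPolynomial (Fin 2) ℂ) (hf : f.IsHomogeneous d)
    (α : ℂ) (hα : α ≠ 0) (hH : hessDet f = C α * (X 0 * X 1) ^ (d - 2))
    (p : Fin 2 → ℂ) (hp0 : p 0 ≠ 0) (hp1 : p 1 = 0)
    (h0' : eval p (pderiv 0 f) = 0) (h1' : eval p (pderiv 1 f) = 0) : False := by
  apply key d hd hodd f hf α hα hH
  · have := eval_homog (IsHomog.pderiv2 hf 0) p hp1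
    rw [h0'] at this
    have hc := (mul_eq_zero.mp this.symm).resolve_right (pow_ne_zero _ hp0)
    rw [coeff_pderiv'] at hc
    rw [show (Finsupp.single (0:Fin 2) (d-1) + Finsupp.single 0 1 : Fin 2 →₀ ℕ)
        = Finsupp.single 0 d from by rw [← Finsupp.single_add]; congr 1; omega] at hc
    rcases mul_eq_zero.mp hc with h | h
    · exfalso
      have : ((Finsupp.single (0:Fin 2) (d-1) : Fin 2 →₀ ℕ) 0 + 1 : ℕ) = d := by simp; omega
      rw [this] at h
      exact (Nat.cast_ne_zero.mpr (by omega : d ≠ 0)) h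
    · exact h
  · have := eval_homog (IsHomog.pderiv2 hf 1) p hp1
    rw [h1'] at this
    have hc := (mul_eq_zero.mp this.symm).resolve_right (pow_ne_zero _ hp0)
    rw [coeff_pderiv'] at hc
    rcases mul_eq_zero.mp hc with h | h
    · exfalso
      have : ((Finsupp.single (0:Fin 2) (d-1) : Fin 2 →₀ ℕ) 1 + 1 : ℕ) = 1 := by
        simp [Finsupp.single_apply]
      rw [this] at h
      simp at h
    · exact h

set_option maxHeartbeats 1000000 in
/-- For odd `d ≥ 3`, there is no singular homogeneous binary polynomial `f` of degree `d`
with `H(f) = α·(x_1x_2)^{d-2}`, `α ≠ 0`: such an `f` has no nonzero point at which both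
partial derivatives vanish. -/
theorem no_singular_binary_odd (d : ℕ) (hd : 3 ≤ d) (hodd : Odd d)
    (f : MvPolynomial (Fin 2) ℂ) (hf : f.IsHomogeneous d)
    (α : ℂ) (hα : α ≠ 0) (hH : hessDet f = C α * (X 0 * X 1) ^ (d - 2)) :
    ¬ ∃ p : Fin 2 → ℂ, p ≠ 0 ∧ ∀ i, eval p (pderiv i f) = 0 := by
  rintro ⟨p, hp, hps⟩
  -- Euler at p shows the evaluated Hessian matrix is singular
  have hpd : ∀ j : Fin 2, p 0 * eval p (pderiv 0 (pderiv j f)) + p 1 * eval p (pderiv 1 (pderiv j f)) = 0 := by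
    intro j
    have he := euler (IsHomog.pderiv2 hf j)
    have h2 := congrArg (eval p) he
    rw [smul_eq_C_mul] at h2
    simp only [map_add, map_mul, eval_C, eval_X, hps j, mul_zero] at h2
    rw [mul_comm (p 0), mul_comm (p 1)]
    exact h2.symm
  set N : Matrix (Fin 2) (Fin 2) ℂ := Matrix.of (fun i j => eval p (pderiv i (pderiv j f))) with hN
  have hvm : Matrix.vecMul p N = 0 := by
    funext j
    rw [hN]
    simp only [Matrix.vecMul, dotProduct, Fin.sum_univ_two, Matrix.of_apply]
    exact hpd j
  have hdet : N.det = 0 := Matrix.exists_vecMul_eq_zero_iff.mp ⟨p, hp, hvm⟩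
  have heval : eval p (hessDet f) = N.det := by
    rw [hessDet, RingHom.map_det]
    congr 1
  rw [hH, hdet] at heval
  simp only [map_mul, map_pow, eval_C, eval_X] at heval
  have hpp : p 0 * p 1 = 0 := by
    have := mul_eq_zero.mp heval
    rcases this with h | h
    · exact absurd h hα
    · exact pow_eq_zero_iff (by omega : d - 2 ≠ 0) |>.mp h
  rcases mul_eq_zero.mp hpp with hp0 | hp1
  · -- p 0 = 0 : swap the variables
    have hp1ne : p 1 ≠ 0 := by
      intro h
      apply hp
      funext i
      fin_cases i
      · exact hp0
      · exact h
    set e := Equiv.swap (0 : Fin 2) 1 with he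
    have hsw : ∀ i : Fin 2, e (e i) = i := fun i => Equiv.swap_apply_self 0 1 i
    have h0e : e 0 = 1 := Equiv.swap_apply_left 0 1
    have h1e : e 1 = 0 := Equiv.swap_apply_right 0 1
    have hpdr : ∀ (i : Fin 2) (g : MvPolynomial (Fin 2) ℂ),
        pderiv i (rename (⇑e) g) = rename (⇑e) (pderiv (e i) g) := by
      intro i g
      have := pderiv_rename e.injective (e i) g
      rwa [hsw i] at this
    apply key2 d hd hodd (rename (⇑e) f) (hf.rename_isHomogeneous) α hα ?_ (p ∘ e) ?_ ?_ ?_ ?_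
    · rw [hess_rename, hH]
      rw [map_mul, map_pow, map_mul, rename_C, rename_X, rename_X, h0e, h1e,
        mul_comm (X (1:Fin 2) : MvPolynomial (Fin 2) ℂ)]
    · simpa [h0e] using hp1ne
    · simpa [h1e] using hp0
    · rw [hpdr, eval_rename, show (p ∘ ⇑e) ∘ ⇑e = p from funext fun i => by simp [hsw i]]
      rw [h0e]
      exact hps 1
    · rw [hpdr, eval_rename, show (p ∘ ⇑e) ∘ ⇑e = p from funext fun i => by simp [hsw i]]
      rw [h1e]
      exact hps 0
  · have hp0ne : p 0 ≠ 0 := by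
      intro h
      apply hp
      funext i
      fin_cases i
      · exact h
      · exact hp1
    exact key2 d hd hodd f hf α hα hH p hp0ne hp1 (hps 0) (hps 1)
end

section
/- Let n ≥ 2, d ≥ 3, and let f = x_1^d + ⋯ + x_n^d be the Fermat polynomial. Suppose g ∈ ℂ[x_1,…,x_n] is a smooth homogeneous polynomial of degree d whose Jacobian ideal equals that of f, i.e. J(g) = J(f) = (x_1^{d−1},…,x_n^{d−1}), and whose Hessian satisfies H(g) = α·(x_1⋯x_n)^{d−2} for some α ∈ ℂ. Then g = β_1x_1^d + ⋯ + β_nx_n^d for some constants β_i ∈ ℂ. -/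
open MvPolynomial

lemma coeff_pderiv_aux {n : ℕ} (f : MvPolynomial (Fin n) ℂ) (i : Fin n) (m : Fin n →₀ ℕ) :
    coeff m (pderiv i f) = ((m i + 1 : ℕ) : ℂ) * coeff (m + Finsupp.single i 1) f := by
  induction f using MvPolynomial.induction_on' with
  | add p q hp hq => simp [hp, hq, mul_add]
  | monomial u a =>
    rw [pderiv_monomial, coeff_monomial, coeff_monomial]
    split_ifs with h1 h2 h2
    · subst h2
      simp only [Finsupp.coe_add, Pi.add_apply, Finsupp.single_eq_same]
      push_cast; ring
    · rcases eq_or_ne (u i) 0 with h0 | h0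
      · rw [h0]; simp
      · exfalso; apply h2
        ext j
        have hj := DFunLike.congr_fun h1 j
        simp only [Finsupp.tsub_apply, Finsupp.coe_add, Pi.add_apply] at hj ⊢
        rcases eq_or_ne j i with rfl | hne
        · simp only [Finsupp.single_eq_same] at hj ⊢; omega
        · simp only [Finsupp.single_eq_of_ne' (Ne.symm hne)] at hj ⊢; omega
    · exfalso; apply h1; subst h2; exact add_tsub_cancel_right m _
    · ring

lemma finsupp_degree_fin {n : ℕ} (m : Fin n →₀ ℕ) : m.degree = ∑ i : Fin n, m i := by
  rw [Finsupp.degree]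
  exact Finset.sum_subset (Finset.subset_univ _) (by simp)

/-- If `g` is a smooth homogeneous polynomial of degree `d ≥ 3` in `n ≥ 2` variables whose
Jacobian ideal equals that of the Fermat polynomial, i.e.
`J(g) = (x_1^{d-1},…,x_n^{d-1})`, and whose Hessian is `α·(x_1⋯x_n)^{d-2}` for some
`α ∈ ℂ`, then `g = β_1x_1^d + ⋯ + β_nx_n^d`. -/
theorem same_jacobian_as_fermat (n d : ℕ) (hn : 2 ≤ n) (hd : 3 ≤ d)
    (g : MvPolynomial (Fin n) ℂ) (hhom : g.IsHomogeneous d)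
    (hsmooth : ∀ p : Fin n → ℂ, (∀ i, eval p (pderiv i g) = 0) → p = 0)
    (hJ : Ideal.span (Set.range fun i => pderiv i g) =
          Ideal.span (Set.range fun i : Fin n => X i ^ (d - 1)))
    (hH : ∃ α : ℂ, hessDet g = C α * (∏ i : Fin n, X i) ^ (d - 2)) :
    ∃ β : Fin n → ℂ, g = ∑ i : Fin n, C (β i) * X i ^ d := by
  classical
  -- rewrite the generators as monomials
  have hrange : (Set.range fun j : Fin n => (X j : MvPolynomial (Fin n) ℂ) ^ (d - 1))
      = (fun s => monomial s (1 : ℂ)) '' (Set.range fun j : Fin n => Finsupp.single j (d - 1)) := by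
    rw [← Set.range_comp]
    refine congrArg Set.range (funext fun j => ?_)
    simp [Function.comp, X_pow_eq_monomial]
  have hspan : ∀ i : Fin n, pderiv i g ∈
      Ideal.span ((fun s => monomial s (1 : ℂ)) '' (Set.range fun j : Fin n => Finsupp.single j (d - 1))) := by
    intro i
    rw [← hrange, ← hJ]
    exact Ideal.subset_span ⟨i, rfl⟩
  -- key: every monomial of g is a pure power
  have key : ∀ m ∈ g.support, ∃ i : Fin n, m = Finsupp.single i d := by
    intro m hm
    have hcm : coeff m g ≠ 0 := mem_support_iff.mp hm
    have hdeg : ∑ i : Fin n, m i = d := by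
      rw [← finsupp_degree_fin]
      by_contra h
      exact hcm (hhom.coeff_eq_zero h)
    have claim : ∀ i : Fin n, 0 < m i →
        ∃ j : Fin n, m = Finsupp.single j (d - 1) + Finsupp.single i 1 := by
      intro i hi
      -- m - single i 1 is in the support of pderiv i g
      have hrepr : (m - Finsupp.single i 1) + Finsupp.single i 1 = m := by
        ext j
        simp only [Finsupp.coe_add, Pi.add_apply, Finsupp.tsub_apply]
        rcases eq_or_ne j i with rfl | hne
        · simp only [Finsupp.single_eq_same]; omega
        · simp only [Finsupp.single_eq_of_ne' (Ne.symm hne)]; omega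
      have hsup : (m - Finsupp.single i 1) ∈ (pderiv i g).support := by
        rw [mem_support_iff, coeff_pderiv_aux, hrepr]
        exact mul_ne_zero (Nat.cast_ne_zero.mpr (Nat.succ_ne_zero _)) hcm
      obtain ⟨s, hs, hle⟩ := mem_ideal_span_monomial_image.mp (hspan i) _ hsup
      obtain ⟨j, rfl⟩ := hs
      refine ⟨j, ?_⟩
      -- single j (d-1) + single i 1 ≤ m pointwise, and degrees agree
      have hptle : ∀ k, (Finsupp.single j (d - 1) + Finsupp.single i 1 : Fin n →₀ ℕ) k ≤ m k := by
        intro k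
        have hk := hle k
        simp only [Finsupp.tsub_apply] at hk
        simp only [Finsupp.coe_add, Pi.add_apply]
        rcases eq_or_ne k i with rfl | hne
        · simp only [Finsupp.single_eq_same] at hk ⊢; omega
        · simp only [Finsupp.single_eq_of_ne' (Ne.symm hne)] at hk ⊢; omega
      have hdeg2 : ∑ k : Fin n, (Finsupp.single j (d - 1) + Finsupp.single i 1 : Fin n →₀ ℕ) k = d := by
        simp only [Finsupp.coe_add, Pi.add_apply, Finset.sum_add_distrib]
        rw [Finset.sum_eq_single j (fun b _ hb => Finsupp.single_eq_of_ne' (Ne.symm hb))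
          (fun h => absurd (Finset.mem_univ j) h)]
        rw [Finset.sum_eq_single i (fun b _ hb => Finsupp.single_eq_of_ne' (Ne.symm hb))
          (fun h => absurd (Finset.mem_univ i) h)]
        simp only [Finsupp.single_eq_same]
        omega
      have := (Finset.sum_eq_sum_iff_of_le (fun k _ => hptle k)).mp (by rw [hdeg, hdeg2])
      ext k
      exact (this k (Finset.mem_univ k)).symm
    -- m is nonzero, pick i with m i > 0
    have hex : ∃ i : Fin n, 0 < m i := by
      by_contra h
      push_neg at h
      have : ∑ i : Fin n, m i = 0 := Finset.sum_eq_zero fun i _ => Nat.le_zero.mp (h i)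
      omega
    obtain ⟨i, hi⟩ := hex
    obtain ⟨j, hj⟩ := claim i hi
    rcases eq_or_ne j i with rfl | hne
    · refine ⟨j, ?_⟩
      have hd1 : d - 1 + 1 = d := by omega
      rw [hj, ← Finsupp.single_add, hd1]
    · exfalso
      have hmj : m j = d - 1 := by
        rw [hj]
        simp [Finsupp.single_eq_of_ne' hne, Finsupp.single_eq_of_ne' (Ne.symm hne)]
      have hmjpos : 0 < m j := by omega
      obtain ⟨j', hj'⟩ := claim j hmjpos
      have := DFunLike.congr_fun hj' j
      simp only [Finsupp.coe_add, Pi.add_apply, Finsupp.single_eq_same] at this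
      have hsa : (Finsupp.single j' (d - 1) : Fin n →₀ ℕ) j = if j' = j then d - 1 else 0 :=
        Finsupp.single_apply
      rw [hsa] at this
      split_ifs at this <;> omega
  -- conclude
  refine ⟨fun i => coeff (Finsupp.single i d) g, ?_⟩
  ext m
  rw [coeff_sum]
  simp only [coeff_C_mul, coeff_X_pow]
  by_cases hm : ∃ i : Fin n, m = Finsupp.single i d
  · obtain ⟨i, rfl⟩ := hm
    rw [Finset.sum_eq_single i]
    · simp
    · intro b _ hb
      rw [if_neg, mul_zero]
      intro h
      exact hb (Finsupp.single_left_injective (by omega) h)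
    · intro h; exact absurd (Finset.mem_univ i) h
  · rw [Finset.sum_eq_zero, ← notMem_support_iff]
    · intro hms
      obtain ⟨i, hi⟩ := key m hms
      exact hm ⟨i, hi⟩
    · intro b _
      rw [if_neg, mul_zero]
      intro h
      exact hm ⟨b, h.symm⟩
end

section
/- Let n ≥ 2 and d ≥ 3, and let g ∈ ℂ[x_1,…,x_n] be a smooth homogeneous polynomial of degree d such that H(g) = x_1^{b_1}⋯x_n^{b_n} is a monomial and such that the Jacobian ideal J(g) is a monomial ideal. Then b_i = d−2 for all i, i.e. H(g) = (x_1⋯x_n)^{d−2}, and g = β_1x_1^d + ⋯ + β_nx_n^d for some constants β_i ∈ ℂ (g is a Fermat polynomial). -/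
open MvPolynomial

namespace MHMJ

variable {n : ℕ}

lemma deg_add (a b : Fin n →₀ ℕ) : (a + b).degree = a.degree + b.degree := by
  simp [Finsupp.degree_eq_weight_one, map_add]

lemma deg_fullsum (t : Fin n →₀ ℕ) : t.degree = ∑ l : Fin n, t l := by
  rw [Finsupp.degree]
  exact Finset.sum_subset (Finset.subset_univ _)
    (fun x _ hx => by simpa using Finsupp.notMem_support_iff.mp hx)

lemma pderiv_comm' (i j : Fin n) (p : MvPolynomial (Fin n) ℂ) :
    pderiv i (pderiv j p) = pderiv j (pderiv i p) := by
  induction p using MvPolynomial.induction_on' with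
  | add p q hp hq => simp [hp, hq]
  | monomial s a =>
    rcases eq_or_ne i j with rfl | hij
    · rfl
    · simp only [pderiv_monomial]
      have h1 : ((s - Finsupp.single j 1 : Fin n →₀ ℕ)) i = s i := by
        simp [Finsupp.tsub_apply, Finsupp.single_apply, hij.symm]
      have h2 : ((s - Finsupp.single i 1 : Fin n →₀ ℕ)) j = s j := by
        simp [Finsupp.tsub_apply, Finsupp.single_apply, hij]
      rw [h1, h2]
      congr 1
      · rw [tsub_tsub, tsub_tsub, add_comm]
      · ring

lemma pderiv_isHomogeneous {d : ℕ} {g : MvPolynomial (Fin n) ℂ} (h : g.IsHomogeneous d)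
    (i : Fin n) : (pderiv i g).IsHomogeneous (d - 1) := by
  nth_rewrite 1 [g.as_sum]
  rw [map_sum]
  apply IsHomogeneous.sum
  intro s hs
  rw [pderiv_monomial]
  rcases eq_or_ne (s i) 0 with h0 | h0
  · rw [h0]; push_cast; rw [mul_zero, monomial_zero]; exact isHomogeneous_zero _ _ _
  · apply isHomogeneous_monomial
    have hdeg : s.degree = d := by
      rw [Finsupp.degree_eq_weight_one]; exact h (mem_support_iff.mp hs)
    have : (s - Finsupp.single i 1) + Finsupp.single i 1 = s := by
      ext l
      rcases eq_or_ne l i with rfl | hl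
      · simp [Finsupp.tsub_apply]; omega
      · simp [Finsupp.tsub_apply, Finsupp.single_apply, Ne.symm hl]
    have h2 := deg_add (s - Finsupp.single i 1) (Finsupp.single i 1)
    rw [this, hdeg] at h2
    have h3 : (Finsupp.single i 1 : Fin n →₀ ℕ).degree = 1 := by
      exact Finsupp.degree_single i 1
    omega


lemma X_mul_mono (i : Fin n) (s : Fin n →₀ ℕ) (a : ℂ) :
    X i * monomial (s - Finsupp.single i 1) (a * s i) = monomial s (a * s i) := by
  rcases eq_or_ne (s i) 0 with h0 | h0
  · rw [h0]; push_cast; rw [mul_zero, monomial_zero, monomial_zero, mul_zero]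
  · have hexp : Finsupp.single i 1 + (s - Finsupp.single i 1) = s := by
      ext l
      rcases eq_or_ne l i with rfl | hl
      · simp [Finsupp.tsub_apply]; omega
      · simp [Finsupp.tsub_apply, Finsupp.single_apply, Ne.symm hl]
    rw [X, monomial_mul, one_mul, hexp]

lemma euler {d : ℕ} {g : MvPolynomial (Fin n) ℂ} (h : g.IsHomogeneous d) :
    (d : ℂ) • g = ∑ i : Fin n, X i * pderiv i g := by
  nth_rewrite 2 [g.as_sum]
  simp only [map_sum, Finset.mul_sum]
  rw [Finset.sum_comm]
  nth_rewrite 1 [g.as_sum]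
  rw [Finset.smul_sum]
  apply Finset.sum_congr rfl
  intro s hs
  have hdeg : s.degree = d := by
    rw [Finsupp.degree_eq_weight_one]; exact h (mem_support_iff.mp hs)
  calc (d:ℂ) • monomial s (coeff s g)
      = monomial s ((d:ℂ) * coeff s g) := by rw [smul_monomial, smul_eq_mul]
    _ = ∑ i : Fin n, monomial s (coeff s g * (s i : ℂ)) := by
        rw [← map_sum (monomial s), ← Finset.mul_sum]
        congr 1
        rw [mul_comm]
        congr 1
        rw [← Nat.cast_sum, ← deg_fullsum, hdeg]
    _ = ∑ i : Fin n, X i * pderiv i (monomial s (coeff s g)) := by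
        apply Finset.sum_congr rfl
        intro i _
        rw [pderiv_monomial, X_mul_mono]

lemma hc_mul {e : ℕ} (p q : MvPolynomial (Fin n) ℂ) (hq : q.IsHomogeneous e) :
    homogeneousComponent e (p * q) = C (coeff 0 p) * q := by
  ext t
  rw [coeff_homogeneousComponent]
  rcases eq_or_ne t.degree e with hte | hte
  · rw [if_pos hte, coeff_C_mul, coeff_mul]
    apply Finset.sum_eq_single_of_mem (0, t) (by simp)
    rintro ⟨u, v⟩ huv hne
    rcases eq_or_ne (coeff v q) 0 with h0 | h0
    · simp [h0]
    · exfalso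
      have hv : v.degree = e := by
        rw [Finsupp.degree_eq_weight_one]; exact hq h0
      have huvt : u + v = t := Finset.HasAntidiagonal.mem_antidiagonal.mp huv
      have : u.degree = 0 := by
        have := deg_add u v
        rw [huvt, hte, hv] at this
        omega
      have hu0 : u = 0 := (Finsupp.degree_eq_zero_iff u).mp this
      apply hne
      rw [hu0] at huvt ⊢
      rw [zero_add] at huvt
      rw [huvt]
  · rw [if_neg hte, coeff_C_mul, hq.coeff_eq_zero hte, mul_zero]


lemma support_mem_of_mem_monomial_span {S : Set (Fin n →₀ ℕ)} {p : MvPolynomial (Fin n) ℂ}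
    (hp : p ∈ Ideal.span ((fun s => (monomial s (1 : ℂ) : MvPolynomial (Fin n) ℂ)) '' S)) :
    ∀ t ∈ p.support,
      (monomial t (1 : ℂ) : MvPolynomial (Fin n) ℂ) ∈
        Ideal.span ((fun s => (monomial s (1 : ℂ) : MvPolynomial (Fin n) ℂ)) '' S) := by
  classical
  set I := Ideal.span ((fun s => (monomial s (1 : ℂ) : MvPolynomial (Fin n) ℂ)) '' S) with hIdef
  induction hp using Submodule.span_induction with
  | mem x hx =>
    obtain ⟨s, hsS, rfl⟩ := hx
    intro t ht
    rw [support_monomial, if_neg one_ne_zero] at ht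
    rw [Finset.mem_singleton] at ht
    rw [ht]
    exact Ideal.subset_span ⟨s, hsS, rfl⟩
  | zero => intro t ht; simp at ht
  | add x y hx hy ihx ihy =>
    intro t ht
    have := MvPolynomial.support_add ht
    rw [Finset.mem_union] at this
    rcases this with h | h
    · exact ihx t h
    · exact ihy t h
  | smul a x hx ihx =>
    intro t ht
    rw [smul_eq_mul] at ht
    have hsub := support_mul a x ht
    rw [Finset.mem_add] at hsub
    obtain ⟨u, hu, v, hv, rfl⟩ := hsub
    have : (monomial (u + v) (1 : ℂ) : MvPolynomial (Fin n) ℂ)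
        = monomial u (1 : ℂ) * monomial v (1 : ℂ) := by rw [monomial_mul, one_mul]
    rw [this]
    exact Ideal.mul_mem_left _ _ (ihx v hv)

end MHMJ


/-- If `g` is a smooth homogeneous polynomial of degree `d ≥ 3` in `n ≥ 2` variables whose
Hessian is a monomial `x_1^{b_1}⋯x_n^{b_n}` and whose Jacobian ideal is a monomial ideal,
then `b_i = d-2` for all `i` and `g` is a Fermat polynomial. -/
theorem monomial_hessian_monomial_jacobian (n d : ℕ) (hn : 2 ≤ n) (hd : 3 ≤ d)
    (g : MvPolynomial (Fin n) ℂ) (hhom : g.IsHomogeneous d)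
    (hsmooth : ∀ p : Fin n → ℂ, (∀ i, eval p (pderiv i g) = 0) → p = 0)
    (b : Fin n → ℕ) (hH : hessDet g = ∏ i : Fin n, X i ^ b i)
    (hmono : ∃ S : Set (Fin n →₀ ℕ),
      Ideal.span (Set.range fun i => pderiv i g) =
        Ideal.span ((fun s => (monomial s (1 : ℂ) : MvPolynomial (Fin n) ℂ)) '' S)) :
    (∀ i, b i = d - 2) ∧ ∃ β : Fin n → ℂ, g = ∑ i : Fin n, C (β i) * X i ^ d := by
  classical
  obtain ⟨S, hS⟩ := hmono
  have hpd : ∀ i, (pderiv i g).IsHomogeneous (d - 1) := fun i => MHMJ.pderiv_isHomogeneous hhom i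
  set Pm : Fin n → MvPolynomial (Fin n) ℂ := fun j => monomial (Finsupp.single j (d - 1)) 1
    with hPmdef
  -- Step 1 : pure powers lie in the Jacobian ideal
  have hPI : ∀ j, Pm j ∈ Ideal.span (Set.range fun i => pderiv i g) := by
    intro j
    have hex : ∃ i, ∃ t ∈ (pderiv i g).support, ∀ l, l ≠ j → t l = 0 := by
      by_contra hcon
      push_neg at hcon
      have heval : ∀ i, eval (Pi.single j 1 : Fin n → ℂ) (pderiv i g) = 0 := by
        intro i
        rw [eval_eq]
        apply Finset.sum_eq_zero
        intro t ht
        obtain ⟨l, hl, hl0⟩ := hcon i t ht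
        have hls : l ∈ t.support := Finsupp.mem_support_iff.mpr hl0
        have hprod : (∏ l ∈ t.support, (Pi.single j 1 : Fin n → ℂ) l ^ t l) = 0 :=
          Finset.prod_eq_zero hls (by rw [Pi.single_eq_of_ne hl, zero_pow hl0])
        rw [hprod, mul_zero]
      have h0 := hsmooth _ heval
      simpa using congrFun h0 j
    obtain ⟨i, t, ht, htj⟩ := hex
    have hdegt : t.degree = d - 1 := by
      rw [Finsupp.degree_eq_weight_one]; exact (hpd i) (mem_support_iff.mp ht)
    have htt : t = Finsupp.single j (d - 1) := by
      have hsum : t.degree = t j := by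
        rw [MHMJ.deg_fullsum]
        exact Finset.sum_eq_single j (fun l _ hl => htj l hl) (by simp)
      ext l
      rcases eq_or_ne l j with rfl | hl
      · rw [Finsupp.single_eq_same]; omega
      · rw [Finsupp.single_eq_of_ne' (Ne.symm hl)]; exact htj l hl
    have hpig : pderiv i g ∈ Ideal.span ((fun s => (monomial s (1:ℂ))) '' S) := by
      rw [← hS]; exact Ideal.subset_span ⟨i, rfl⟩
    have hmem := MHMJ.support_mem_of_mem_monomial_span hpig t ht
    rw [htt] at hmem
    rw [hS]
    exact hmem
  -- Step 2 : pure powers lie in the ℂ-span of the partials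
  set U := Submodule.span ℂ (Set.range fun i => pderiv i g) with hU
  have hdegsingle : ∀ (j : Fin n) (k : ℕ), (Finsupp.single j k : Fin n →₀ ℕ).degree = k := by
    intro j k
    rw [MHMJ.deg_fullsum]
    rw [Finset.sum_eq_single j (fun l _ hl => Finsupp.single_eq_of_ne' (Ne.symm hl)) (by simp)]
    exact Finsupp.single_eq_same
  have hPmh : ∀ j, homogeneousComponent (d - 1) (Pm j) = Pm j := by
    intro j
    rw [homogeneousComponent_of_mem
      (isHomogeneous_monomial (n := d - 1) 1 (hdegsingle j (d - 1)))]
    rw [if_pos rfl]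
  have hPU : ∀ j, Pm j ∈ U := by
    intro j
    obtain ⟨p, hp⟩ := Ideal.mem_span_range_iff_exists_fun.mp (hPI j)
    apply (Submodule.mem_span_range_iff_exists_fun ℂ).mpr
    refine ⟨fun i => coeff 0 (p i), ?_⟩
    have hcomp := congrArg (homogeneousComponent (d - 1)) hp
    rw [map_sum, hPmh j] at hcomp
    rw [← hcomp]
    apply Finset.sum_congr rfl
    intro i _
    rw [MHMJ.hc_mul (p i) (pderiv i g) (hpd i), smul_eq_C_mul]
  -- Step 3 : U equals the span of the pure powers
  have hlin : LinearIndependent ℂ Pm := by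
    have hinj : Function.Injective (fun j : Fin n => Finsupp.single j (d - 1)) :=
      Finsupp.single_left_injective (show d - 1 ≠ 0 by omega)
    have : Pm = (basisMonomials (Fin n) ℂ) ∘ (fun j => Finsupp.single j (d - 1)) := by
      funext j
      rw [hPmdef, Function.comp_apply, coe_basisMonomials]
    rw [this]
    exact (basisMonomials (Fin n) ℂ).linearIndependent.comp _ hinj
  haveI hfin : FiniteDimensional ℂ U :=
    FiniteDimensional.span_of_finite ℂ (Set.finite_range _)
  have hle : Submodule.span ℂ (Set.range Pm) ≤ U :=
    Submodule.span_le.mpr (Set.range_subset_iff.mpr hPU)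
  have hrank1 : Module.finrank ℂ (Submodule.span ℂ (Set.range Pm)) = n := by
    rw [finrank_span_eq_card hlin, Fintype.card_fin]
  have hrank2 : Module.finrank ℂ U ≤ n := by
    have h2 := finrank_range_le_card (R := ℂ) (fun i => pderiv i g)
    simpa [Set.finrank] using h2
  have hUeq : Submodule.span ℂ (Set.range Pm) = U :=
    Submodule.eq_of_le_of_finrank_le hle (by rw [hrank1]; exact hrank2)
  -- Step 4 : coefficients
  have hmem : ∀ i, pderiv i g ∈ Submodule.span ℂ (Set.range Pm) := by
    intro i; rw [hUeq]; exact Submodule.subset_span ⟨i, rfl⟩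
  choose c hc using fun i => (Submodule.mem_span_range_iff_exists_fun ℂ).mp (hmem i)
  -- Step 5 : second partials
  have hpp : ∀ k i, pderiv k (pderiv i g)
      = c i k • monomial (Finsupp.single k (d - 2)) ((d - 1 : ℕ) : ℂ) := by
    intro k i
    rw [← hc i, map_sum]
    simp only [smul_eq_C_mul, pderiv_C_mul, hPmdef, pderiv_monomial]
    rw [Finset.sum_eq_single k]
    · have hexp : Finsupp.single k (d - 1) - Finsupp.single k 1 = Finsupp.single k (d - 2) := by
        ext l
        rcases eq_or_ne l k with rfl | hl
        · simp [Finsupp.tsub_apply]; omega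
        · simp [Finsupp.tsub_apply, Finsupp.single_apply, Ne.symm hl]
      rw [hexp, Finsupp.single_eq_same, one_mul, C_mul_monomial]
    · intro j _ hjk
      rw [Finsupp.single_eq_of_ne' hjk, Nat.cast_zero, mul_zero, monomial_zero, mul_zero]
    · intro h; exact absurd (Finset.mem_univ k) h
  have hoff : ∀ i k, i ≠ k → c i k = 0 := by
    intro i k hik
    have hcm := MHMJ.pderiv_comm' k i g
    rw [hpp k i, hpp i k] at hcm
    have hco := congrArg (coeff (Finsupp.single k (d - 2))) hcm
    rw [coeff_smul, coeff_smul, coeff_monomial, coeff_monomial, if_pos rfl] at hco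
    rw [if_neg (by
      intro hsing
      exact hik (by
        have := congrArg (fun f : Fin n →₀ ℕ => f i) hsing
        simp only [Finsupp.single_eq_same] at this
        rw [Finsupp.single_apply] at this
        by_contra hcon
        split_ifs at this with hki
        · exact hik (hki.symm)
        · omega))] at hco
    rw [smul_zero, smul_eq_mul] at hco
    have hd1 : ((d - 1 : ℕ) : ℂ) ≠ 0 := by
      exact_mod_cast (Nat.cast_ne_zero (R := ℂ)).mpr (by omega)
    exact (mul_eq_zero.mp hco).resolve_right hd1
  -- Step 6 : each partial is a pure monomial
  have hpart : ∀ i, pderiv i g = monomial (Finsupp.single i (d - 1)) (c i i) := by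
    intro i
    rw [← hc i]
    rw [Finset.sum_eq_single i]
    · rw [hPmdef, smul_monomial, smul_eq_mul, mul_one]
    · intro j _ hji
      rw [hoff i j (Ne.symm hji), zero_smul]
    · intro h; exact absurd (Finset.mem_univ i) h
  -- Step 7 : Fermat form
  have hdC : ((d : ℕ) : ℂ) ≠ 0 := by exact_mod_cast (by omega : d ≠ 0)
  have heul := MHMJ.euler hhom
  have hXmul : ∀ i : Fin n, X i * monomial (Finsupp.single i (d - 1)) (c i i)
      = monomial (Finsupp.single i d) (c i i) := by
    intro i
    rw [X, monomial_mul, one_mul, ← Finsupp.single_add,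
      Nat.add_sub_cancel' (show 1 ≤ d by omega)]
  have hgsum : g = ∑ i : Fin n, monomial (Finsupp.single i d) ((d : ℂ)⁻¹ * c i i) := by
    have : (d : ℂ) • g = ∑ i : Fin n, monomial (Finsupp.single i d) (c i i) := by
      rw [heul]
      apply Finset.sum_congr rfl
      intro i _
      rw [hpart i, hXmul i]
    calc g = (d : ℂ)⁻¹ • ((d : ℂ) • g) := (inv_smul_smul₀ hdC g).symm
      _ = ∑ i : Fin n, monomial (Finsupp.single i d) ((d : ℂ)⁻¹ * c i i) := by
          rw [this, Finset.smul_sum]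
          apply Finset.sum_congr rfl
          intro i _
          rw [smul_monomial, smul_eq_mul]
  have hfermat : ∃ β : Fin n → ℂ, g = ∑ i : Fin n, C (β i) * X i ^ d := by
    refine ⟨fun i => (d : ℂ)⁻¹ * c i i, ?_⟩
    rw [hgsum]
    apply Finset.sum_congr rfl
    intro i _
    rw [X_pow_eq_monomial, C_mul_monomial, mul_one]
  -- Step 8 : Hessian comparison
  refine ⟨?_, hfermat⟩
  have hdiag : (Matrix.of fun i j => pderiv i (pderiv j g))
      = Matrix.diagonal (fun i => monomial (Finsupp.single i (d - 2)) (c i i * ((d - 1 : ℕ) : ℂ))) := by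
    ext i j
    rw [Matrix.of_apply, Matrix.diagonal_apply, hpp i j]
    rcases eq_or_ne i j with rfl | hij
    · rw [if_pos rfl, smul_monomial, smul_eq_mul]
    · rw [if_neg hij, hoff j i (Ne.symm hij), zero_smul]
  have hdet : hessDet g
      = monomial (∑ i : Fin n, Finsupp.single i (d - 2))
          (∏ i : Fin n, (c i i * ((d - 1 : ℕ) : ℂ))) := by
    rw [hessDet, hdiag, Matrix.det_diagonal]
    calc ∏ i : Fin n, monomial (Finsupp.single i (d - 2)) (c i i * ((d - 1 : ℕ) : ℂ))
        = ∏ i : Fin n, (C (c i i * ((d - 1 : ℕ) : ℂ)) *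
            monomial (Finsupp.single i (d - 2)) (1 : ℂ)) := by
          apply Finset.prod_congr rfl
          intro i _
          rw [C_mul_monomial, mul_one]
      _ = (∏ i : Fin n, C (c i i * ((d - 1 : ℕ) : ℂ))) *
            ∏ i : Fin n, monomial (Finsupp.single i (d - 2)) (1 : ℂ) := by
          rw [Finset.prod_mul_distrib]
      _ = C (∏ i : Fin n, (c i i * ((d - 1 : ℕ) : ℂ))) *
            monomial (∑ i : Fin n, Finsupp.single i (d - 2)) (1 : ℂ) := by
          rw [← map_prod, monomial_sum_one]
      _ = monomial (∑ i : Fin n, Finsupp.single i (d - 2))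
            (∏ i : Fin n, (c i i * ((d - 1 : ℕ) : ℂ))) := by
          rw [C_mul_monomial, mul_one]
  have hrhs : (∏ i : Fin n, (X i : MvPolynomial (Fin n) ℂ) ^ b i)
      = monomial (∑ i : Fin n, Finsupp.single i (b i)) (1 : ℂ) := by
    rw [monomial_sum_one]
    apply Finset.prod_congr rfl
    intro i _
    rw [X_pow_eq_monomial]
  rw [hdet, hrhs] at hH
  rcases (monomial_eq_monomial_iff _ _ _ _).mp hH with ⟨hexp, _⟩ | ⟨_, h10⟩
  · intro i
    have := congrArg (fun f : Fin n →₀ ℕ => f i) hexp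
    simp only [Finsupp.finset_sum_apply] at this
    rw [Finset.sum_eq_single i (fun l _ hl => Finsupp.single_eq_of_ne' hl) (by simp),
        Finset.sum_eq_single i (fun l _ hl => Finsupp.single_eq_of_ne' hl) (by simp),
        Finsupp.single_eq_same, Finsupp.single_eq_same] at this
    omega
  · exact absurd h10 one_ne_zero
end

section
/- Let n ≥ 2, d ≥ 3 with d ≥ n+1, and let L be the linear map from the space of homogeneous polynomials of degree d in ℂ[x_1,…,x_n] to the space of homogeneous polynomials of degree n(d−2) defined by L(g) = Σ_{i=1}^n (∏_{j≠i} x_j^{d−2})·∂²g/∂x_i². Then the kernel of L has dimension n−1. Consequently, for the Fermat polynomial f = Σ_{i=1}^n x_i^d, the kernel of the differential dH_f of the Hessian map has dimension n−1. -/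
open MvPolynomial

/-- The linear map `L(g) = Σ_{i=1}^n (∏_{j≠i} x_j^{d-2})·∂²g/∂x_i²`, which computes (up to
the nonzero scalar `(d(d-1))^{n-1}`) the differential of the Hessian map at the Fermat
polynomial `f = Σ x_i^d`. -/
noncomputable def fermatDiff (n d : ℕ) :
    MvPolynomial (Fin n) ℂ →ₗ[ℂ] MvPolynomial (Fin n) ℂ :=
  ∑ i : Fin n,
    (LinearMap.mulLeft ℂ (∏ j ∈ Finset.univ.erase i, (X j : MvPolynomial (Fin n) ℂ) ^ (d - 2))).comp
      ((pderiv (R := ℂ) i).toLinearMap.comp (pderiv i).toLinearMap)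

namespace FermatAux

lemma coeff_pderiv' {σ : Type*} (i : σ) (m : σ →₀ ℕ) (f : MvPolynomial σ ℂ) :
    coeff m (pderiv i f) = ((m i : ℂ) + 1) * coeff (m + Finsupp.single i 1) f := by
  classical
  induction f using MvPolynomial.induction_on' with
  | add p q hp hq => simp [map_add, coeff_add, hp, hq, mul_add]
  | monomial a c =>
    rw [pderiv_monomial, coeff_monomial, coeff_monomial]
    split_ifs with h1 h2 h2
    · subst h2
      simp [Finsupp.add_apply, Finsupp.single_eq_same]
      ring
    · have hai : a i = 0 := by
        by_contra hne
        apply h2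
        have hle : Finsupp.single i 1 ≤ a := by
          rw [Finsupp.single_le_iff]; omega
        rw [← h1, tsub_add_cancel_of_le hle]
      simp [hai]
    · exfalso; apply h1; subst h2; simp
    · ring

/-- The exponent of the multiplier monomial `∏_{j ≠ i} x_j^{d-2}`. -/
noncomputable def psiF (n d : ℕ) (i : Fin n) : Fin n →₀ ℕ :=
  ∑ j ∈ Finset.univ.erase i, Finsupp.single j (d - 2)

lemma psiF_apply (n d : ℕ) (i j : Fin n) :
    psiF n d i j = if j = i then 0 else d - 2 := by
  classical
  rw [psiF, Finset.sum_apply']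
  simp_rw [Finsupp.single_apply]
  rw [Finset.sum_ite_eq' (Finset.univ.erase i) j (fun _ => d - 2)]
  simp [Finset.mem_erase]

lemma prod_X_pow_eq (n d : ℕ) (i : Fin n) :
    (∏ j ∈ Finset.univ.erase i, (X j : MvPolynomial (Fin n) ℂ) ^ (d - 2))
      = monomial (psiF n d i) 1 := by
  rw [psiF]
  induction (Finset.univ.erase i) using Finset.cons_induction with
  | empty => simp
  | cons a s ha ih =>
    rw [Finset.prod_cons, Finset.sum_cons, ih, X_pow_eq_monomial, monomial_mul, one_mul]

lemma coeff_fermatDiff (n d : ℕ) (m : Fin n →₀ ℕ) (g : MvPolynomial (Fin n) ℂ) :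
    coeff m (fermatDiff n d g) =
      ∑ i : Fin n, (if psiF n d i ≤ m then
        (((m - psiF n d i) i : ℂ) + 1) * (((m - psiF n d i) i : ℂ) + 2) *
          coeff (m - psiF n d i + Finsupp.single i 2) g else 0) := by
  rw [fermatDiff, LinearMap.sum_apply, coeff_sum]
  refine Finset.sum_congr rfl fun i _ => ?_
  rw [LinearMap.comp_apply, LinearMap.comp_apply, LinearMap.mulLeft_apply, prod_X_pow_eq,
    coeff_monomial_mul']
  simp only [Derivation.coeFn_coe]
  split_ifs with h
  · rw [one_mul, coeff_pderiv', coeff_pderiv', Finsupp.add_apply, Finsupp.single_eq_same,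
      add_assoc, ← Finsupp.single_add]
    norm_num
    ring
  · rfl

lemma fermatDiff_X_pow (n d : ℕ) (hd : 3 ≤ d) (i : Fin n) :
    fermatDiff n d ((X i : MvPolynomial (Fin n) ℂ) ^ d)
      = monomial (∑ j : Fin n, Finsupp.single j (d - 2)) ((d * (d - 1) : ℕ) : ℂ) := by
  classical
  rw [fermatDiff, LinearMap.sum_apply]
  rw [Finset.sum_eq_single i]
  · rw [LinearMap.comp_apply, LinearMap.comp_apply, LinearMap.mulLeft_apply, prod_X_pow_eq,
      X_pow_eq_monomial]
    simp only [Derivation.coeFn_coe]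
    rw [pderiv_monomial, pderiv_monomial]
    rw [Finsupp.single_eq_same, ← Finsupp.single_tsub]
    rw [Finsupp.single_eq_same, ← Finsupp.single_tsub]
    have h1 : d - 1 - 1 = d - 2 := by omega
    rw [h1, monomial_mul, one_mul]
    congr 1
    · rw [psiF, ← Finset.sum_erase_add Finset.univ _ (Finset.mem_univ i)]
    · push_cast [Nat.cast_sub (by omega : 1 ≤ d)]
      ring
  · intro k _ hk
    rw [LinearMap.comp_apply, LinearMap.comp_apply, LinearMap.mulLeft_apply,
      X_pow_eq_monomial]
    simp only [Derivation.coeFn_coe]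
    rw [pderiv_monomial]
    rw [Finsupp.single_apply, if_neg (fun h => hk (by exact h.symm ▸ rfl))]
    simp
  · intro h; exact absurd (Finset.mem_univ i) h

/-- The map sending coefficients `c` to `Σ c_i x_i^d`. -/
noncomputable def Tmap (n d : ℕ) : (Fin n → ℂ) →ₗ[ℂ] MvPolynomial (Fin n) ℂ :=
  ∑ i : Fin n, (LinearMap.toSpanSingleton ℂ _ ((X i : MvPolynomial (Fin n) ℂ) ^ d)).comp
    (LinearMap.proj i)

lemma Tmap_apply (n d : ℕ) (c : Fin n → ℂ) :
    Tmap n d c = ∑ i : Fin n, c i • (X i : MvPolynomial (Fin n) ℂ) ^ d := by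
  simp [Tmap, LinearMap.toSpanSingleton_apply]

lemma coeff_Tmap (n d : ℕ) (hd : d ≠ 0) (c : Fin n → ℂ) (i : Fin n) :
    coeff (Finsupp.single i d) (Tmap n d c) = c i := by
  rw [Tmap_apply, coeff_sum]
  rw [Finset.sum_eq_single i]
  · simp [coeff_X_pow]
  · intro j _ hj
    rw [coeff_smul, coeff_X_pow, if_neg, smul_zero]
    exact fun h => hj (by rwa [Finsupp.single_left_inj hd] at h)
  · simp

lemma Tmap_injective (n d : ℕ) (hd : d ≠ 0) : Function.Injective (Tmap n d) := by
  rw [injective_iff_map_eq_zero]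
  intro c hc
  funext i
  have := coeff_Tmap n d hd c i
  rw [hc, coeff_zero] at this
  exact this.symm

/-- The sum-of-coordinates functional. -/
noncomputable def lsum (n : ℕ) : (Fin n → ℂ) →ₗ[ℂ] ℂ := ∑ i : Fin n, LinearMap.proj i

lemma fermatDiff_Tmap (n d : ℕ) (hd : 3 ≤ d) (c : Fin n → ℂ) :
    fermatDiff n d (Tmap n d c)
      = monomial (∑ j : Fin n, Finsupp.single j (d - 2))
          (lsum n c * ((d * (d - 1) : ℕ) : ℂ)) := by
  rw [Tmap_apply, map_sum]
  simp_rw [map_smul, fermatDiff_X_pow n d hd, smul_monomial]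
  rw [← map_sum (monomial _)]
  congr 1
  rw [lsum, LinearMap.sum_apply, Finset.sum_mul]
  simp [smul_eq_mul]

/-- Every monomial in the support of a homogeneous element of the kernel is a pure power. -/
lemma support_pure (n d : ℕ) (hd : 3 ≤ d) (hdn : n + 1 ≤ d)
    (g : MvPolynomial (Fin n) ℂ) (hhom : g ∈ homogeneousSubmodule (Fin n) ℂ d)
    (hker : fermatDiff n d g = 0) (a : Fin n →₀ ℕ) (ha : coeff a g ≠ 0) :
    ∃ i, a = Finsupp.single i d := by
  classical
  have hgh : g.IsHomogeneous d := (mem_homogeneousSubmodule d g).mp hhom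
  have hsub : ∑ j ∈ a.support, a j = ∑ j : Fin n, a j :=
    Finset.sum_subset (Finset.subset_univ _)
      (fun i _ hi => Finsupp.notMem_support_iff.mp hi)
  have hdeg : ∑ j : Fin n, a j = d := by
    have h := hgh ha
    rw [Finsupp.weight_apply, Finsupp.sum] at h
    simp only [Pi.one_apply, smul_eq_mul, mul_one] at h
    rw [← hsub]
    exact h
  -- find i with 2 ≤ a i
  have ⟨i, hi2⟩ : ∃ i, 2 ≤ a i := by
    by_contra hno
    push_neg at hno
    have : ∑ j : Fin n, a j ≤ ∑ _j : Fin n, 1 :=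
      Finset.sum_le_sum (fun j _ => by have := hno j; omega)
    simp [hdeg] at this
    omega
  refine ⟨i, ?_⟩
  by_contra hne
  -- then a i < d
  have haid : a i < d := by
    rcases lt_or_ge (a i) d with h | h
    · exact h
    · exfalso
      apply hne
      have hsplit : a i + ∑ j ∈ Finset.univ.erase i, a j = d := by
        rw [Finset.add_sum_erase _ _ (Finset.mem_univ i)]; exact hdeg
      have hz : ∀ j ∈ Finset.univ.erase i, a j = 0 := by
        rw [← Finset.sum_eq_zero_iff]
        omega
      ext j
      rcases eq_or_ne j i with rfl | hji
      · rw [Finsupp.single_eq_same]; omega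
      · rw [Finsupp.single_eq_of_ne hji]
        exact hz j (Finset.mem_erase.mpr ⟨hji, Finset.mem_univ j⟩)
  -- the crucial coefficient computation
  set m := (a - Finsupp.single i 2) + psiF n d i with hm
  have hsle : Finsupp.single i 2 ≤ a := by rw [Finsupp.single_le_iff]; exact hi2
  have hckey : coeff m (fermatDiff n d g) =
      (((a i - 2 : ℕ) : ℂ) + 1) * (((a i - 2 : ℕ) : ℂ) + 2) * coeff a g := by
    rw [coeff_fermatDiff]
    rw [Finset.sum_eq_single i]
    · have h1 : psiF n d i ≤ m := le_add_self
      rw [if_pos h1, hm, add_tsub_cancel_right]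
      have h2 : (a - Finsupp.single i 2 : Fin n →₀ ℕ) i = a i - 2 := by
        rw [Finsupp.tsub_apply, Finsupp.single_eq_same]
      rw [h2, tsub_add_cancel_of_le hsle]
    · intro k _ hk
      rw [if_neg]
      intro hle
      have h3 := hle i
      rw [psiF_apply, if_neg (fun h => hk h.symm)] at h3
      have h4 : m i = a i - 2 := by
        rw [hm, Finsupp.add_apply, Finsupp.tsub_apply, Finsupp.single_eq_same,
          psiF_apply, if_pos rfl, add_zero]
      omega
    · intro h; exact absurd (Finset.mem_univ i) h
  rw [hker, coeff_zero] at hckey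
  have hne1 : (((a i - 2 : ℕ) : ℂ) + 1) ≠ 0 := by
    have : (((a i - 2 : ℕ) : ℂ) + 1) = ((a i - 2 + 1 : ℕ) : ℂ) := by push_cast; ring
    rw [this]
    exact Nat.cast_ne_zero.mpr (by omega)
  have hne2 : (((a i - 2 : ℕ) : ℂ) + 2) ≠ 0 := by
    have : (((a i - 2 : ℕ) : ℂ) + 2) = ((a i - 2 + 2 : ℕ) : ℂ) := by push_cast; ring
    rw [this]
    exact Nat.cast_ne_zero.mpr (by omega)
  apply ha
  rcases mul_eq_zero.mp hckey.symm with h6 | h6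
  · rcases mul_eq_zero.mp h6 with h7 | h7
    · exact absurd h7 hne1
    · exact absurd h7 hne2
  · exact h6

end FermatAux

open FermatAux in
/-- For `n ≥ 2` and `d ≥ n+1`, the kernel of `L` on homogeneous forms of degree `d` has
dimension `n-1`; consequently `dim Ker(dH_f) = n-1` for the Fermat polynomial `f`. -/
theorem ker_differential_fermat_large_degree (n d : ℕ) (hn : 2 ≤ n) (hd : 3 ≤ d)
    (hdn : n + 1 ≤ d) :
    Module.finrank ℂ
        ↥(homogeneousSubmodule (Fin n) ℂ d ⊓ LinearMap.ker (fermatDiff n d)) = n - 1 := by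
  classical
  have hd0 : d ≠ 0 := by omega
  have hDne : ((d * (d - 1) : ℕ) : ℂ) ≠ 0 :=
    Nat.cast_ne_zero.mpr (Nat.mul_ne_zero (by omega) (by omega))
  have hEq : homogeneousSubmodule (Fin n) ℂ d ⊓ LinearMap.ker (fermatDiff n d)
      = Submodule.map (Tmap n d) (LinearMap.ker (lsum n)) := by
    apply le_antisymm
    · rintro g hg
      obtain ⟨hhom, hker'⟩ := Submodule.mem_inf.mp hg
      have hker : fermatDiff n d g = 0 := LinearMap.mem_ker.mp hker'
      set c : Fin n → ℂ := fun i => coeff (Finsupp.single i d) g with hc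
      have hgT : g = Tmap n d c := by
        apply MvPolynomial.ext
        intro m
        by_cases hex : ∃ i, m = Finsupp.single i d
        · obtain ⟨i, rfl⟩ := hex
          rw [coeff_Tmap n d hd0]
        · have h1 : coeff m g = 0 := by
            by_contra h
            exact hex (support_pure n d hd hdn g hhom hker m h)
          rw [h1, Tmap_apply, coeff_sum]
          symm
          refine Finset.sum_eq_zero fun i _ => ?_
          rw [coeff_smul, coeff_X_pow, if_neg (fun h => hex ⟨i, h.symm⟩), smul_zero]
      have hcker : c ∈ LinearMap.ker (lsum n) := by
        rw [LinearMap.mem_ker]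
        have h0 : fermatDiff n d (Tmap n d c) = 0 := by rw [← hgT]; exact hker
        rw [fermatDiff_Tmap n d hd c, monomial_eq_zero] at h0
        rcases mul_eq_zero.mp h0 with h | h
        · exact h
        · exact absurd h hDne
      exact ⟨c, hcker, hgT.symm⟩
    · rintro x ⟨c, hc, rfl⟩
      refine Submodule.mem_inf.mpr ⟨?_, ?_⟩
      · rw [Tmap_apply]
        refine Submodule.sum_mem _ fun i _ => Submodule.smul_mem _ _ ?_
        rw [mem_homogeneousSubmodule]
        exact isHomogeneous_X_pow i d
      · rw [LinearMap.mem_ker, fermatDiff_Tmap n d hd, LinearMap.mem_ker.mp hc, zero_mul,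
          monomial_zero]
  rw [hEq]
  rw [← LinearEquiv.finrank_eq
    (Submodule.equivMapOfInjective (Tmap n d) (Tmap_injective n d hd0) (LinearMap.ker (lsum n)))]
  have hsurj : Function.Surjective (lsum n) := by
    intro x
    refine ⟨Pi.single ⟨0, by omega⟩ x, ?_⟩
    rw [lsum, LinearMap.sum_apply]
    simp only [LinearMap.proj_apply]
    rw [Finset.sum_pi_single']
    simp
  have hrn := LinearMap.finrank_range_add_finrank_ker (lsum n)
  rw [LinearMap.range_eq_top.mpr hsurj, finrank_top, Module.finrank_self,
    Module.finrank_fin_fun] at hrn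
  omega
end

section
/- Let d ≥ 2 and f = x_1^k x_2^{d−k} ∈ ℂ[x_1,x_2] with 0 < k ≤ d, and let dH_f be the differential of the Hessian map at f, restricted to homogeneous binary forms of degree d. (i) If k = d (i.e. f = x_1^d), then dim Ker(dH_f) = 2. (ii) If k = d−1, then dim Ker(dH_f) = 1 unless d = 2, in which case dim Ker(dH_f) = 2. -/
open MvPolynomial

/-- The differential of the Hessian map at a binary form `f`:
`dH_f(g) = g_{11}f_{22} + f_{11}g_{22} - 2f_{12}g_{12}`. -/
noncomputable def dH2 (f : MvPolynomial (Fin 2) ℂ) :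
    MvPolynomial (Fin 2) ℂ →ₗ[ℂ] MvPolynomial (Fin 2) ℂ :=
  (LinearMap.mulLeft ℂ (pderiv 1 (pderiv 1 f))).comp
      ((pderiv (R := ℂ) (0 : Fin 2)).toLinearMap.comp (pderiv 0).toLinearMap)
  + (LinearMap.mulLeft ℂ (pderiv 0 (pderiv 0 f))).comp
      ((pderiv (R := ℂ) (1 : Fin 2)).toLinearMap.comp (pderiv 1).toLinearMap)
  - (LinearMap.mulLeft ℂ (2 * pderiv 0 (pderiv 1 f))).comp
      ((pderiv (R := ℂ) (0 : Fin 2)).toLinearMap.comp (pderiv 1).toLinearMap)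

/-- The kernel of the differential of the Hessian map at `f`, restricted to homogeneous
binary forms of degree `d`. -/
noncomputable def kerDH2 (d : ℕ) (f : MvPolynomial (Fin 2) ℂ) :
    Submodule ℂ (MvPolynomial (Fin 2) ℂ) :=
  homogeneousSubmodule (Fin 2) ℂ d ⊓ LinearMap.ker (dH2 f)

namespace KerDHAux

open Finsupp

/-- Exponent of the monomial `x^a y^(d-a)`. -/
noncomputable def μ (d a : ℕ) : Fin 2 →₀ ℕ := Finsupp.single 0 a + Finsupp.single 1 (d - a)

/-- The monomial `x^a y^(d-a)`. -/
noncomputable def Mon (d a : ℕ) : MvPolynomial (Fin 2) ℂ := monomial (μ d a) 1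

lemma pq_apply0 (p q : ℕ) :
    (Finsupp.single (0 : Fin 2) p + Finsupp.single 1 q : Fin 2 →₀ ℕ) 0 = p := by
  simp [Finsupp.single_apply]

lemma pq_apply1 (p q : ℕ) :
    (Finsupp.single (0 : Fin 2) p + Finsupp.single 1 q : Fin 2 →₀ ℕ) 1 = q := by
  simp [Finsupp.single_apply]

lemma pq_sub0 (p q : ℕ) :
    (Finsupp.single (0 : Fin 2) p + Finsupp.single 1 q) - Finsupp.single 0 1
      = Finsupp.single 0 (p - 1) + Finsupp.single 1 q := by
  ext i
  fin_cases i <;> simp [Finsupp.tsub_apply, Finsupp.single_apply]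

lemma pq_sub1 (p q : ℕ) :
    (Finsupp.single (0 : Fin 2) p + Finsupp.single 1 q) - Finsupp.single 1 1
      = Finsupp.single 0 p + Finsupp.single 1 (q - 1) := by
  ext i
  fin_cases i <;> simp [Finsupp.tsub_apply, Finsupp.single_apply]

lemma pq_add (p q p' q' : ℕ) :
    (Finsupp.single (0 : Fin 2) p + Finsupp.single 1 q)
      + (Finsupp.single 0 p' + Finsupp.single 1 q')
    = Finsupp.single 0 (p + p') + Finsupp.single 1 (q + q') := by
  rw [Finsupp.single_add, Finsupp.single_add]; abel

lemma pq_eq_iff {p q p' q' : ℕ} :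
    (Finsupp.single (0 : Fin 2) p + Finsupp.single 1 q)
      = Finsupp.single 0 p' + Finsupp.single 1 q' ↔ p = p' ∧ q = q' := by
  constructor
  · intro h
    constructor
    · have := DFunLike.congr_fun h 0
      simpa [pq_apply0] using this
    · have := DFunLike.congr_fun h 1
      simpa [pq_apply1] using this
  · rintro ⟨rfl, rfl⟩; rfl

lemma pd0 (p q : ℕ) (c : ℂ) :
    pderiv 0 (monomial (Finsupp.single (0 : Fin 2) p + Finsupp.single 1 q) c)
      = monomial (Finsupp.single 0 (p - 1) + Finsupp.single 1 q) (c * p) := by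
  rw [pderiv_monomial, pq_sub0, pq_apply0]

lemma pd1 (p q : ℕ) (c : ℂ) :
    pderiv 1 (monomial (Finsupp.single (0 : Fin 2) p + Finsupp.single 1 q) c)
      = monomial (Finsupp.single 0 p + Finsupp.single 1 (q - 1)) (c * q) := by
  rw [pderiv_monomial, pq_sub1, pq_apply1]

lemma dH2_apply (f g : MvPolynomial (Fin 2) ℂ) :
    dH2 f g = pderiv 1 (pderiv 1 f) * pderiv 0 (pderiv 0 g)
      + pderiv 0 (pderiv 0 f) * pderiv 1 (pderiv 1 g)
      - 2 * pderiv 0 (pderiv 1 f) * pderiv 0 (pderiv 1 g) := by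
  simp [dH2, LinearMap.mulLeft_apply, mul_assoc]

lemma deg2 (m : Fin 2 →₀ ℕ) : m.degree = m 0 + m 1 := by
  rw [Finsupp.degree]; show ∑ i ∈ m.support, m i = _
  rw [Finset.sum_subset (Finset.subset_univ m.support)
    (fun x _ hx => Finsupp.notMem_support_iff.mp hx)]
  exact Fin.sum_univ_two _

lemma mon_mem_hom {d a : ℕ} (h : a ≤ d) :
    Mon d a ∈ homogeneousSubmodule (Fin 2) ℂ d := by
  rw [mem_homogeneousSubmodule]
  apply isHomogeneous_monomial
  rw [μ, deg2, pq_apply0, pq_apply1]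
  omega

lemma homog_support {d : ℕ} {g : MvPolynomial (Fin 2) ℂ}
    (hg : g ∈ homogeneousSubmodule (Fin 2) ℂ d)
    {m : Fin 2 →₀ ℕ} (hm : coeff m g ≠ 0) : m 0 + m 1 = d := by
  have h := (mem_homogeneousSubmodule _ _).mp hg hm
  rw [show (weight 1 : (Fin 2 →₀ ℕ) →+ ℕ) = weight (fun _ => 1) from rfl,
    ← degree_eq_weight_one (R := ℕ), deg2] at h
  exact h

lemma decomp {d : ℕ} {g : MvPolynomial (Fin 2) ℂ}
    (hg : g ∈ homogeneousSubmodule (Fin 2) ℂ d) :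
    g = ∑ a ∈ Finset.range (d + 1), coeff (μ d a) g • Mon d a := by
  apply MvPolynomial.ext
  intro m
  rw [coeff_sum]
  simp only [Mon, coeff_smul, smul_eq_mul, coeff_monomial, mul_ite, mul_one, mul_zero]
  by_cases h : coeff m g = 0
  · rw [h, Finset.sum_eq_zero]
    intro a _
    split_ifs with hh
    · rw [hh, h]
    · rfl
  · have hm := homog_support hg h
    have hm0 : μ d (m 0) = m := by
      have h1 : m 1 = d - m 0 := by omega
      rw [μ, ← h1]
      ext i
      fin_cases i <;> simp [Finsupp.single_apply]
    rw [Finset.sum_eq_single_of_mem (m 0) (Finset.mem_range.mpr (by omega))]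
    · rw [if_pos hm0, hm0]
    · intro b _ hb
      rw [if_neg]
      intro hbm
      apply hb
      have := DFunLike.congr_fun (hbm.trans hm0.symm) 0
      simpa [μ, pq_apply0] using this

/-- Extraction of coefficients from membership in the kernel. -/
lemma coeff_eq_zero_of_ker {d : ℕ} {f g : MvPolynomial (Fin 2) ℂ}
    (hg : g ∈ homogeneousSubmodule (Fin 2) ℂ d) (hker : dH2 f g = 0)
    (E : ℕ → (Fin 2 →₀ ℕ)) (c : ℕ → ℂ)
    (hE : ∀ a ∈ Finset.range (d + 1), dH2 f (Mon d a) = monomial (E a) (c a))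
    (a : ℕ) (had : a ∈ Finset.range (d + 1)) (hca : c a ≠ 0)
    (hother : ∀ b ∈ Finset.range (d + 1), b ≠ a → E b = E a → c b = 0) :
    coeff (μ d a) g = 0 := by
  have h0 : (0 : MvPolynomial (Fin 2) ℂ)
      = ∑ b ∈ Finset.range (d + 1), coeff (μ d b) g • monomial (E b) (c b) := by
    rw [← hker]
    conv_lhs => rw [decomp hg]
    rw [map_sum]
    exact Finset.sum_congr rfl fun b hb => by rw [map_smul, hE b hb]
  have h1 := congrArg (coeff (E a)) h0
  rw [coeff_zero, coeff_sum] at h1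
  simp only [coeff_smul, smul_eq_mul, coeff_monomial] at h1
  rw [Finset.sum_eq_single_of_mem a had] at h1
  · rw [if_pos rfl] at h1
    rcases mul_eq_zero.mp h1.symm with h | h
    · exact h
    · exact absurd h hca
  · intro b hb hba
    split_ifs with hEb
    · rw [hother b hb hba hEb, mul_zero]
    · rw [mul_zero]

lemma comp1 (d a : ℕ) (hd : 2 ≤ d) :
    ∃ c : ℂ, dH2 (monomial (μ d d) 1) (Mon d a)
        = monomial (Finsupp.single 0 (d - 2 + a) + Finsupp.single 1 (d - 2 - a)) c
      ∧ (a ≤ d - 2 → c ≠ 0) ∧ (d - 1 ≤ a → c = 0) := by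
  have hdd : d - d = 0 := by omega
  rw [dH2_apply, Mon, μ, μ, hdd]
  simp only [pd0, pd1, Nat.cast_zero, mul_zero, zero_mul, monomial_zero, zero_add, sub_zero,
    monomial_mul, pq_add, one_mul, map_zero]
  rcases le_or_gt a (d - 2) with h | h
  · have he : (Finsupp.single (0 : Fin 2) (d - 1 - 1 + a) + Finsupp.single 1 (d - a - 1 - 1))
        = Finsupp.single 0 (d - 2 + a) + Finsupp.single 1 (d - 2 - a) :=
      pq_eq_iff.mpr ⟨by omega, by omega⟩
    rw [he]
    refine ⟨_, rfl, fun _ h0 => ?_, fun h' => absurd h' (by omega)⟩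
    simp only [mul_eq_zero, Nat.cast_eq_zero] at h0
    omega
  · refine ⟨0, ?_, fun h' => absurd h' (by omega), fun _ => rfl⟩
    rcases (show d - a = 0 ∨ d - a - 1 = 0 from by omega) with h0 | h0 <;>
      rw [h0] <;> simp

lemma two_mul_mono (s : Fin 2 →₀ ℕ) (c : ℂ) :
    (2 : MvPolynomial (Fin 2) ℂ) * monomial s c = monomial s (2 * c) := by
  rw [show (2 : MvPolynomial (Fin 2) ℂ) = C 2 from (map_ofNat C 2).symm, C_mul_monomial]

lemma nat_ne {d a : ℕ} (hd : 3 ≤ d) (h1 : 1 ≤ a) (h2 : a ≤ d - 2) :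
    (d - 1) * (d - 2) * ((d - a) * (d - a - 1)) ≠ 2 * ((d - 1) * ((d - a) * a)) := by
  intro h
  have e1 : (d-1)*(d-2)*((d-a)*(d-a-1)) = (d-1)*((d-a)*((d-2)*(d-a-1))) := by ring
  have e2 : 2*((d-1)*((d-a)*a)) = (d-1)*((d-a)*(2*a)) := by ring
  rw [e1, e2] at h
  have h3 : (d-2)*(d-a-1) = 2*a :=
    Nat.eq_of_mul_eq_mul_left (by omega) (Nat.eq_of_mul_eq_mul_left (by omega) h)
  set b := d - a - 1 with hbdef
  have hab : a + b = d - 1 := by omega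
  have h4 : d * b = 2 * (d - 1) := by
    have hd2 : d - 2 + 2 = d := by omega
    calc d * b = (d - 2 + 2) * b := by rw [hd2]
      _ = (d-2)*b + 2*b := by ring
      _ = 2*a + 2*b := by rw [h3]
      _ = 2*(a+b) := by ring
      _ = 2*(d-1) := by rw [hab]
  rcases (show b = 1 ∨ 2 ≤ b from by omega) with hb | hb
  · rw [hb, mul_one] at h4; omega
  · have h5 : d * 2 ≤ d * b := Nat.mul_le_mul_left d hb
    rw [h4] at h5; omega

lemma comp2 (d a : ℕ) (hd : 3 ≤ d) :
    ∃ c : ℂ, dH2 (monomial (μ d (d - 1)) 1) (Mon d a)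
        = monomial (Finsupp.single 0 (d - 3 + a) + Finsupp.single 1 (d - 1 - a)) c
      ∧ (a ≤ d - 1 → c ≠ 0) ∧ (d ≤ a → c = 0) := by
  have hdd : d - (d - 1) = 1 := by omega
  rw [dH2_apply, Mon, μ, μ, hdd]
  simp only [pd0, pd1, Nat.sub_self, Nat.cast_zero, mul_zero, zero_mul, monomial_zero, zero_add,
    sub_zero, Nat.cast_one, mul_one, one_mul, map_zero, two_mul_mono, monomial_mul, pq_add]
  rw [show d - 1 - 1 = d - 2 from by omega]
  rcases le_or_gt d a with had | had
  · refine ⟨0, ?_, fun h' => absurd h' (by omega), fun _ => rfl⟩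
    rw [show d - a = 0 from by omega]
    simp
  rcases (show a = 0 ∨ (1 ≤ a ∧ a ≤ d - 2) ∨ a = d - 1 from by omega) with h0 | ⟨h1, h2⟩ | h3
  · subst h0
    simp only [Nat.cast_zero, mul_zero, monomial_zero, sub_zero]
    rw [show (Finsupp.single (0 : Fin 2) (d - 2 - 1 + 0) + Finsupp.single 1 (1 + (d - 0 - 1 - 1)))
        = Finsupp.single 0 (d - 3 + 0) + Finsupp.single 1 (d - 1 - 0) from
      pq_eq_iff.mpr ⟨by omega, by omega⟩]
    refine ⟨_, rfl, fun _ h0 => ?_, fun h' => absurd h' (by omega)⟩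
    simp only [mul_eq_zero, Nat.cast_eq_zero] at h0
    omega
  · rw [show (Finsupp.single (0 : Fin 2) (d - 2 - 1 + a) + Finsupp.single 1 (1 + (d - a - 1 - 1)))
        = Finsupp.single 0 (d - 3 + a) + Finsupp.single 1 (d - 1 - a) from
      pq_eq_iff.mpr ⟨by omega, by omega⟩,
      show (Finsupp.single (0 : Fin 2) (d - 2 + (a - 1)) + Finsupp.single 1 (d - a - 1))
        = Finsupp.single 0 (d - 3 + a) + Finsupp.single 1 (d - 1 - a) from
      pq_eq_iff.mpr ⟨by omega, by omega⟩, ← map_sub]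
    refine ⟨_, rfl, fun _ h0 => ?_, fun h' => absurd h' (by omega)⟩
    rw [sub_eq_zero] at h0
    apply nat_ne hd h1 h2
    have hc : (((d-1)*(d-2)*((d-a)*(d-a-1)) : ℕ) : ℂ) = ((2*((d-1)*((d-a)*a)) : ℕ) : ℂ) := by
      push_cast
      linear_combination h0
    exact_mod_cast hc
  · rw [show d - a - 1 = 0 from by omega]
    simp only [Nat.cast_zero, mul_zero, monomial_zero, zero_sub]
    rw [← map_neg,
      show (Finsupp.single (0 : Fin 2) (d - 2 + (a - 1)) + Finsupp.single 1 0)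
        = Finsupp.single 0 (d - 3 + a) + Finsupp.single 1 (d - 1 - a) from
      pq_eq_iff.mpr ⟨by omega, by omega⟩]
    refine ⟨_, rfl, fun _ h0 => ?_, fun h' => absurd h' (by omega)⟩
    simp only [neg_eq_zero, mul_eq_zero, Nat.cast_eq_zero, OfNat.ofNat_ne_zero, false_or] at h0
    omega

lemma comp3 (a : ℕ) :
    ∃ c : ℂ, dH2 (monomial (μ 2 1) 1) (Mon 2 a)
        = monomial (Finsupp.single 0 (a - 1) + Finsupp.single 1 (1 - a)) c
      ∧ (a = 1 → c ≠ 0) ∧ (a ≠ 1 → c = 0) := by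
  rw [dH2_apply, Mon, μ, μ]
  simp only [pd0, pd1, Nat.sub_self, Nat.cast_zero, mul_zero, zero_mul, monomial_zero, zero_add,
    sub_zero, Nat.cast_one, mul_one, one_mul, map_zero, two_mul_mono, monomial_mul, pq_add,
    Nat.reduceSub, zero_sub]
  rw [show (2 : ℕ) - a - 1 = 1 - a from by omega, ← map_neg]
  refine ⟨_, rfl, fun h1 h0 => ?_, fun h1 => ?_⟩
  · subst h1
    norm_num at h0
  · rcases (show a = 0 ∨ 2 ≤ a from by omega) with h | h
    · subst h; norm_num
    · rw [show (2 : ℕ) - a = 0 from by omega]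
      norm_num

lemma mem_kerDH2 {d : ℕ} {f g : MvPolynomial (Fin 2) ℂ} :
    g ∈ kerDH2 d f ↔ g ∈ homogeneousSubmodule (Fin 2) ℂ d ∧ dH2 f g = 0 := by
  rw [kerDH2, Submodule.mem_inf, LinearMap.mem_ker]

lemma ker1 (d : ℕ) (hd : 2 ≤ d) :
    kerDH2 d (monomial (μ d d) 1)
      = Submodule.span ℂ {Mon d (d - 1), Mon d d} := by
  choose c hc hcne hc0 using fun a => comp1 d a hd
  apply le_antisymm
  · intro g hg
    obtain ⟨hg1, hg2⟩ := mem_kerDH2.mp hg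
    rw [decomp hg1]
    apply Submodule.sum_mem
    intro a ha
    have ha' : a < d + 1 := Finset.mem_range.mp ha
    rcases le_or_gt a (d - 2) with h | h
    · rw [coeff_eq_zero_of_ker hg1 hg2 _ c (fun b _ => hc b) a ha (hcne a h) ?_, zero_smul]
      · exact zero_mem _
      · intro b _ hba hE
        have h0 := DFunLike.congr_fun hE 0
        rw [pq_apply0, pq_apply0] at h0
        exact absurd (by omega) hba
    · apply Submodule.smul_mem
      apply Submodule.subset_span
      rcases (show a = d - 1 ∨ a = d from by omega) with h' | h' <;> rw [h']
      · exact Set.mem_insert _ _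
      · exact Set.mem_insert_iff.mpr (Or.inr rfl)
  · rw [Submodule.span_le]
    rintro x hx
    rcases hx with rfl | rfl
    · rw [SetLike.mem_coe, mem_kerDH2]
      exact ⟨mon_mem_hom (by omega), by rw [hc, hc0 (d - 1) (by omega), monomial_zero]⟩
    · rw [SetLike.mem_coe, mem_kerDH2]
      exact ⟨mon_mem_hom le_rfl, by rw [hc, hc0 d (by omega), monomial_zero]⟩

lemma ker2 (d : ℕ) (hd : 3 ≤ d) :
    kerDH2 d (monomial (μ d (d - 1)) 1) = Submodule.span ℂ {Mon d d} := by
  choose c hc hcne hc0 using fun a => comp2 d a hd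
  apply le_antisymm
  · intro g hg
    obtain ⟨hg1, hg2⟩ := mem_kerDH2.mp hg
    rw [decomp hg1]
    apply Submodule.sum_mem
    intro a ha
    have ha' : a < d + 1 := Finset.mem_range.mp ha
    rcases le_or_gt a (d - 1) with h | h
    · rw [coeff_eq_zero_of_ker hg1 hg2 _ c (fun b _ => hc b) a ha (hcne a h) ?_, zero_smul]
      · exact zero_mem _
      · intro b _ hba hE
        have h0 := DFunLike.congr_fun hE 0
        rw [pq_apply0, pq_apply0] at h0
        exact absurd (by omega) hba
    · apply Submodule.smul_mem
      apply Submodule.subset_span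
      rw [show a = d from by omega]
      rfl
  · rw [Submodule.span_le]
    rintro x rfl
    rw [SetLike.mem_coe, mem_kerDH2]
    exact ⟨mon_mem_hom le_rfl, by rw [hc, hc0 d le_rfl, monomial_zero]⟩

lemma ker3 : kerDH2 2 (monomial (μ 2 1) 1) = Submodule.span ℂ {Mon 2 0, Mon 2 2} := by
  choose c hc hcne hc0 using comp3
  apply le_antisymm
  · intro g hg
    obtain ⟨hg1, hg2⟩ := mem_kerDH2.mp hg
    rw [decomp hg1]
    apply Submodule.sum_mem
    intro a ha
    rcases (show a = 1 ∨ (a = 0 ∨ a = 2) from by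
        have := Finset.mem_range.mp ha; omega) with h | h
    · rw [coeff_eq_zero_of_ker hg1 hg2 _ c (fun b _ => hc b) a ha (by rw [h]; exact hcne 1 rfl) ?_,
        zero_smul]
      · exact zero_mem _
      · intro b _ hba _
        exact hc0 b (by omega)
    · apply Submodule.smul_mem
      apply Submodule.subset_span
      rcases h with h' | h' <;> rw [h']
      · exact Set.mem_insert _ _
      · exact Set.mem_insert_iff.mpr (Or.inr rfl)
  · rw [Submodule.span_le]
    rintro x hx
    rcases hx with rfl | rfl
    · rw [SetLike.mem_coe, mem_kerDH2]
      exact ⟨mon_mem_hom (by omega), by rw [hc, hc0 0 (by omega), monomial_zero]⟩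
    · rw [SetLike.mem_coe, mem_kerDH2]
      exact ⟨mon_mem_hom le_rfl, by rw [hc, hc0 2 (by omega), monomial_zero]⟩

lemma finrank_span_pair {s t : Fin 2 →₀ ℕ} (hst : s ≠ t) :
    Module.finrank ℂ ↥(Submodule.span ℂ
      ({monomial s 1, monomial t 1} : Set (MvPolynomial (Fin 2) ℂ))) = 2 := by
  have hinj : Function.Injective ![s, t] := by
    intro i j hij
    fin_cases i <;> fin_cases j <;> simp_all
  have h2 : ({monomial s (1 : ℂ), monomial t 1} : Set (MvPolynomial (Fin 2) ℂ))
      = Set.range ((basisMonomials (Fin 2) ℂ) ∘ ![s, t]) := by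
    ext x
    simp [Fin.exists_fin_two, coe_basisMonomials, eq_comm]
  rw [h2, finrank_span_eq_card ((basisMonomials (Fin 2) ℂ).linearIndependent.comp _ hinj)]
  simp

lemma mon_ne_zero (d a : ℕ) : Mon d a ≠ 0 := by
  simp [Mon, monomial_eq_zero]

end KerDHAux

/-- For `f = x_1^k x_2^{d-k}` with `0 < k ≤ d`, `d ≥ 2`:
(i) if `k = d` then `dim Ker(dH_f) = 2`;
(ii) if `k = d-1` then `dim Ker(dH_f) = 1`, unless `d = 2`, in which case it is `2`. -/
theorem ker_dH_monomial_extreme_cases (d k : ℕ) (hd : 2 ≤ d) (hk0 : 0 < k) (hkd : k ≤ d) :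
    (k = d → Module.finrank ℂ ↥(kerDH2 d (X 0 ^ k * X 1 ^ (d - k))) = 2) ∧
    (k = d - 1 → d ≠ 2 → Module.finrank ℂ ↥(kerDH2 d (X 0 ^ k * X 1 ^ (d - k))) = 1) ∧
    (k = d - 1 → d = 2 → Module.finrank ℂ ↥(kerDH2 d (X 0 ^ k * X 1 ^ (d - k))) = 2) := by
  refine ⟨?_, ?_, ?_⟩
  · intro hk
    subst hk
    have hf : (X 0 ^ k * X 1 ^ (k - k) : MvPolynomial (Fin 2) ℂ)
        = monomial (KerDHAux.μ k k) 1 := by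
      rw [X_pow_eq_monomial, X_pow_eq_monomial, monomial_mul, one_mul, KerDHAux.μ]
    rw [hf, KerDHAux.ker1 k hd, KerDHAux.Mon, KerDHAux.Mon]
    apply KerDHAux.finrank_span_pair
    intro h
    have h0 := DFunLike.congr_fun h 0
    rw [KerDHAux.μ, KerDHAux.μ, KerDHAux.pq_apply0, KerDHAux.pq_apply0] at h0
    omega
  · intro hk hne2
    subst hk
    have hd3 : 3 ≤ d := by omega
    have hf : (X 0 ^ (d - 1) * X 1 ^ (d - (d - 1)) : MvPolynomial (Fin 2) ℂ)
        = monomial (KerDHAux.μ d (d - 1)) 1 := by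
      rw [X_pow_eq_monomial, X_pow_eq_monomial, monomial_mul, one_mul, KerDHAux.μ]
    rw [hf, KerDHAux.ker2 d hd3]
    exact finrank_span_singleton (KerDHAux.mon_ne_zero d d)
  · intro hk h2
    subst h2
    subst hk
    have hf : (X 0 ^ (2 - 1) * X 1 ^ (2 - (2 - 1)) : MvPolynomial (Fin 2) ℂ)
        = monomial (KerDHAux.μ 2 1) 1 := by
      rw [X_pow_eq_monomial, X_pow_eq_monomial, monomial_mul, one_mul, KerDHAux.μ]
    rw [hf, KerDHAux.ker3, KerDHAux.Mon, KerDHAux.Mon]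
    apply KerDHAux.finrank_span_pair
    intro h
    have h0 := DFunLike.congr_fun h 0
    rw [KerDHAux.μ, KerDHAux.μ, KerDHAux.pq_apply0, KerDHAux.pq_apply0] at h0
    omega
end

section
/- Let d ≥ 2, let f = x_1^k x_2^{d−k} ∈ ℂ[x_1,x_2] with 0 < k ≤ d−2, and let dH_f be the differential of the Hessian map at f, restricted to homogeneous binary forms of degree d. Then the dimension of Ker(dH_f) equals the number of integers j with 0 ≤ j ≤ d such that d(k−j)² − d(k+j) + 2kj = 0. -/
open MvPolynomial

/-- exponent of the degree-d monomial x^j y^(d-j) -/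
noncomputable def mexp (d j : ℕ) : Fin 2 →₀ ℕ := Finsupp.single 0 j + Finsupp.single 1 (d - j)

/-- exponent of the output monomial -/
noncomputable def wexp (d k j : ℕ) : Fin 2 →₀ ℕ :=
  Finsupp.single 0 (k + j - 2) + Finsupp.single 1 (2*d - k - j - 2)

/-- the diagonal coefficient -/
noncomputable def ccoef (d k j : ℕ) : ℂ :=
  ((j : ℂ) * ((j-1 : ℕ) : ℂ)) * (((d-k : ℕ) : ℂ) * ((d-k-1 : ℕ) : ℂ))
  + (((d-j : ℕ) : ℂ) * ((d-j-1 : ℕ) : ℂ)) * ((k : ℂ) * ((k-1 : ℕ) : ℂ))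
  - 2 * (((d-k : ℕ) : ℂ) * (k : ℂ)) * (((d-j : ℕ) : ℂ) * (j : ℂ))

lemma finsupp_fin2_ext {a b : Fin 2 →₀ ℕ} (h0 : a 0 = b 0) (h1 : a 1 = b 1) : a = b := by
  ext i
  fin_cases i <;> assumption

lemma L1 (d k j : ℕ) (hd : 2 ≤ d) (hk0 : 0 < k) (hkd : k ≤ d - 2) (hj : j ≤ d) :
    dH2 (X 0 ^ k * X 1 ^ (d - k)) (monomial (mexp d j) 1)
      = monomial (wexp d k j) (ccoef d k j) := by
  have hf : (X 0 ^ k * X 1 ^ (d-k) : MvPolynomial (Fin 2) ℂ) = monomial (mexp d k) 1 := by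
    simp [X_pow_eq_monomial, monomial_mul, mexp]
  rw [hf]
  have h2 : (2 : MvPolynomial (Fin 2) ℂ) = C 2 := (map_ofNat C 2).symm
  simp only [dH2, LinearMap.add_apply, LinearMap.sub_apply, LinearMap.comp_apply,
    LinearMap.mulLeft_apply, Derivation.coeFn_coe, pderiv_monomial, h2, C_mul_monomial,
    monomial_mul]
  simp only [mexp, Finsupp.coe_tsub, Pi.sub_apply, Finsupp.coe_add, Pi.add_apply,
    Finsupp.single_apply, if_true, if_false, one_ne_zero, zero_ne_one, reduceIte,
    add_zero, zero_add, one_mul, Nat.cast_sub, tsub_zero]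
  have key : ∀ (E : Fin 2 →₀ ℕ) (c : ℂ), c = 0 ∨ E = wexp d k j →
      (monomial E c : MvPolynomial (Fin 2) ℂ) = monomial (wexp d k j) c := by
    rintro E c (rfl | rfl) <;> simp
  have e1 : (monomial ((((Finsupp.single (0:Fin 2) k + Finsupp.single 1 (d-k))
        - Finsupp.single 1 1) - Finsupp.single 1 1)
        + (((Finsupp.single (0:Fin 2) j + Finsupp.single 1 (d-j))
        - Finsupp.single 0 1) - Finsupp.single 0 1))
        ((↑(d-k) * ↑(d-k-1) * (↑j * ↑(j-1)) : ℂ)) : MvPolynomial (Fin 2) ℂ)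
      = monomial (wexp d k j) ((↑(d-k) * ↑(d-k-1) * (↑j * ↑(j-1)) : ℂ)) := by
    apply key
    rcases Nat.lt_or_ge j 2 with h | h
    · left; interval_cases j <;> simp
    · right
      apply finsupp_fin2_ext <;>
        simp [wexp, Finsupp.single_apply] <;> omega
  have e2 : (monomial ((((Finsupp.single (0:Fin 2) k + Finsupp.single 1 (d-k))
        - Finsupp.single 0 1) - Finsupp.single 0 1)
        + (((Finsupp.single (0:Fin 2) j + Finsupp.single 1 (d-j))
        - Finsupp.single 1 1) - Finsupp.single 1 1))
        ((↑k * ↑(k-1) * (↑(d-j) * ↑(d-j-1)) : ℂ)) : MvPolynomial (Fin 2) ℂ)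
      = monomial (wexp d k j) ((↑k * ↑(k-1) * (↑(d-j) * ↑(d-j-1)) : ℂ)) := by
    apply key
    by_cases hc : 2 ≤ k ∧ j + 2 ≤ d
    · right
      apply finsupp_fin2_ext <;>
        simp [wexp, Finsupp.single_apply] <;> omega
    · left
      have h : k = 1 ∨ d - j = 0 ∨ d - j = 1 := by omega
      rcases h with h | h | h <;> simp [h]
  have e3 : (monomial ((((Finsupp.single (0:Fin 2) k + Finsupp.single 1 (d-k))
        - Finsupp.single 1 1) - Finsupp.single 0 1)
        + (((Finsupp.single (0:Fin 2) j + Finsupp.single 1 (d-j))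
        - Finsupp.single 1 1) - Finsupp.single 0 1))
        ((2 * (↑(d-k) * ↑k) * (↑(d-j) * ↑j) : ℂ)) : MvPolynomial (Fin 2) ℂ)
      = monomial (wexp d k j) ((2 * (↑(d-k) * ↑k) * (↑(d-j) * ↑j) : ℂ)) := by
    apply key
    by_cases hc : 1 ≤ j ∧ j + 1 ≤ d
    · right
      apply finsupp_fin2_ext <;>
        simp [wexp, Finsupp.single_apply] <;> omega
    · left
      have h : j = 0 ∨ d - j = 0 := by omega
      rcases h with h | h <;> simp [h]
  rw [e1, e2, e3, ← map_add, ← map_sub]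
  congr 1
  simp only [ccoef]
  ring

lemma cast_mul_pred (n : ℕ) : (n : ℂ) * ((n - 1 : ℕ) : ℂ) = (n : ℂ) * ((n : ℂ) - 1) := by
  cases n with
  | zero => simp
  | succ m => push_cast [Nat.succ_sub_one]; ring

lemma L0 (d k j : ℕ) (hd : 2 ≤ d) (hk : k ≤ d) (hj : j ≤ d) :
    ccoef d k j = 0 ↔
      (d : ℤ) * ((k : ℤ) - (j : ℤ)) ^ 2 - (d : ℤ) * ((k : ℤ) + (j : ℤ))
        + 2 * (k : ℤ) * (j : ℤ) = 0 := by
  have key : ccoef d k j = ((((d : ℤ) - 1) * ((d : ℤ) * ((k : ℤ) - (j : ℤ)) ^ 2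
      - (d : ℤ) * ((k : ℤ) + (j : ℤ)) + 2 * (k : ℤ) * (j : ℤ)) : ℤ) : ℂ) := by
    simp only [ccoef]
    rw [cast_mul_pred j, cast_mul_pred (d-k), cast_mul_pred (d-j), cast_mul_pred k]
    simp only [Nat.cast_sub hk, Nat.cast_sub hj]
    push_cast
    ring
  rw [key, Int.cast_eq_zero, mul_eq_zero]
  constructor
  · rintro (h | h)
    · omega
    · exact h
  · intro h; right; exact h

@[simp] lemma mexp_apply0 (d j : ℕ) : mexp d j 0 = j := by
  simp [mexp, Finsupp.single_apply]

@[simp] lemma mexp_apply1 (d j : ℕ) : mexp d j 1 = d - j := by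
  simp [mexp, Finsupp.single_apply]

lemma mexp_injective (d : ℕ) : Function.Injective (mexp d) := by
  intro a b h
  have := congrArg (fun f : Fin 2 →₀ ℕ => f 0) h
  simpa using this

lemma mexp_eq_self {d : ℕ} (m : Fin 2 →₀ ℕ) (h : m 0 + m 1 = d) : mexp d (m 0) = m := by
  apply finsupp_fin2_ext <;> simp [mexp, Finsupp.single_apply] <;> omega

lemma deg_fin2 (m : Fin 2 →₀ ℕ) : (∑ i ∈ m.support, m i) = m 0 + m 1 := by
  rw [Finset.sum_subset (Finset.subset_univ _)
    (fun i _ hi => Finsupp.notMem_support_iff.mp hi)]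
  exact Fin.sum_univ_two m

lemma ccoef_one_zero (d : ℕ) : ccoef d 1 0 = 0 := by
  simp [ccoef]

lemma wexp_inj (d k : ℕ) {j j' : ℕ} (hj : j ≤ d) (hj' : j' ≤ d) (hk : 0 < k)
    (h : wexp d k j = wexp d k j') (hc : ccoef d k j ≠ 0) (hc' : ccoef d k j' ≠ 0) :
    j = j' := by
  have h0 := congrArg (fun f : Fin 2 →₀ ℕ => f 0) h
  simp only [wexp, Finsupp.add_apply, Finsupp.single_apply] at h0
  norm_num at h0
  -- h0 : k + j - 2 = k + j' - 2
  have hj1 : k = 1 → 0 < j := by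
    rintro rfl
    rcases Nat.eq_zero_or_pos j with rfl | h
    · exact absurd (ccoef_one_zero d) hc
    · exact h
  have hj1' : k = 1 → 0 < j' := by
    rintro rfl
    rcases Nat.eq_zero_or_pos j' with rfl | h
    · exact absurd (ccoef_one_zero d) hc'
    · exact h
  rcases Nat.lt_or_ge k 2 with h2 | h2
  · have hk1 : k = 1 := by omega
    have := hj1 hk1
    have := hj1' hk1
    omega
  · omega

lemma degree_fin2_s16 (m : Fin 2 →₀ ℕ) : Finsupp.degree m = m 0 + m 1 := by
  rw [Finsupp.degree_apply, Finset.sum_subset (Finset.subset_univ _)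
    (fun i _ hi => Finsupp.notMem_support_iff.mp hi)]
  exact Fin.sum_univ_two m


/-- For `f = x_1^k x_2^{d-k}` with `0 < k ≤ d-2`, `d ≥ 2`, the dimension of `Ker(dH_f)`
equals the number of integers `0 ≤ j ≤ d` with `d(k-j)² - d(k+j) + 2kj = 0`. -/
theorem ker_dH_monomial_count (d k : ℕ) (hd : 2 ≤ d) (hk0 : 0 < k) (hkd : k ≤ d - 2) :
    Module.finrank ℂ ↥(kerDH2 d (X 0 ^ k * X 1 ^ (d - k))) =
      ((Finset.range (d + 1)).filter fun j : ℕ =>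
        (d : ℤ) * ((k : ℤ) - (j : ℤ)) ^ 2 - (d : ℤ) * ((k : ℤ) + (j : ℤ))
          + 2 * (k : ℤ) * (j : ℤ) = 0).card := by
  classical
  set S := (Finset.range (d + 1)).filter (fun j : ℕ =>
      (d : ℤ) * ((k : ℤ) - (j : ℤ)) ^ 2 - (d : ℤ) * ((k : ℤ) + (j : ℤ))
        + 2 * (k : ℤ) * (j : ℤ) = 0) with hS
  have hkd' : k ≤ d := le_trans hkd (Nat.sub_le d 2)
  have hSsub : S ⊆ Finset.range (d + 1) := Finset.filter_subset _ _
  have hcc : ∀ j ∈ Finset.range (d + 1), (j ∈ S ↔ ccoef d k j = 0) := by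
    intro j hjr
    have hj : j ≤ d := Nat.lt_succ_iff.mp (Finset.mem_range.mp hjr)
    rw [hS, Finset.mem_filter, L0 d k j hd hkd' hj]
    tauto
  set f : MvPolynomial (Fin 2) ℂ := X 0 ^ k * X 1 ^ (d - k) with hf
  set fam : {x // x ∈ S} → MvPolynomial (Fin 2) ℂ :=
    fun j => monomial (mexp d (j : ℕ)) 1 with hfam
  have hspan : kerDH2 d f = Submodule.span ℂ (Set.range fam) := by
    apply le_antisymm
    · intro g hg
      obtain ⟨hg1, hg2⟩ := Submodule.mem_inf.mp hg
      rw [mem_homogeneousSubmodule] at hg1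
      rw [LinearMap.mem_ker] at hg2
      set a : ℕ → ℂ := fun j => coeff (mexp d j) g with ha
      have grepr : g = ∑ j ∈ Finset.range (d + 1), monomial (mexp d j) (a j) := by
        have hsupp : g.support ⊆ (Finset.range (d + 1)).image (mexp d) := by
          intro m hm
          have hdeg : Finsupp.degree m = d := by
            by_contra hne
            exact mem_support_iff.mp hm (hg1.coeff_eq_zero hne)
          rw [degree_fin2_s16] at hdeg
          exact Finset.mem_image.mpr ⟨m 0, Finset.mem_range.mpr (by omega),
            mexp_eq_self m hdeg⟩
        calc g = ∑ m ∈ (Finset.range (d + 1)).image (mexp d), monomial m (coeff m g) := by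
              rw [← Finset.sum_subset hsupp
                (fun m _ hm => by rw [notMem_support_iff.mp hm, map_zero])]
              exact as_sum g
          _ = ∑ j ∈ Finset.range (d + 1), monomial (mexp d j) (a j) :=
              Finset.sum_image (fun x _ y _ h => mexp_injective d h)
      have himg : dH2 f g
          = ∑ j ∈ Finset.range (d + 1), monomial (wexp d k j) (a j * ccoef d k j) := by
        conv_lhs => rw [grepr]
        rw [map_sum]
        refine Finset.sum_congr rfl fun j hjr => ?_
        have hj : j ≤ d := Nat.lt_succ_iff.mp (Finset.mem_range.mp hjr)
        have : (monomial (mexp d j) (a j) : MvPolynomial (Fin 2) ℂ)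
            = a j • monomial (mexp d j) 1 := by
          rw [smul_monomial, smul_eq_mul, mul_one]
        rw [this, map_smul, hf, L1 d k j hd hk0 hkd hj, smul_monomial, smul_eq_mul]
      have hzero : ∀ j ∈ Finset.range (d + 1), j ∉ S → a j = 0 := by
        intro j0 hj0r hj0S
        have hj0 : j0 ≤ d := Nat.lt_succ_iff.mp (Finset.mem_range.mp hj0r)
        have hcj0 : ccoef d k j0 ≠ 0 := fun h => hj0S ((hcc j0 hj0r).mpr h)
        have h0 : coeff (wexp d k j0) (∑ j ∈ Finset.range (d + 1),
            monomial (wexp d k j) (a j * ccoef d k j)) = 0 := by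
          rw [← himg, hg2, coeff_zero]
        rw [coeff_sum, Finset.sum_eq_single j0] at h0
        · rw [coeff_monomial, if_pos rfl] at h0
          exact (mul_eq_zero.mp h0).resolve_right hcj0
        · intro b hbr hbne
          have hb : b ≤ d := Nat.lt_succ_iff.mp (Finset.mem_range.mp hbr)
          by_cases hcb : ccoef d k b = 0
          · rw [hcb, mul_zero, map_zero, coeff_zero]
          · rw [coeff_monomial, if_neg]
            intro hw
            exact hbne (wexp_inj d k hb hj0 hk0 hw hcb hcj0)
        · intro h; exact absurd hj0r h
      have grepr2 : g = ∑ j ∈ S, monomial (mexp d j) (a j) := by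
        rw [grepr]
        exact (Finset.sum_subset hSsub (fun j hjr hjS => by
          rw [hzero j hjr hjS, map_zero])).symm
      rw [grepr2]
      refine Submodule.sum_mem _ fun j hj => ?_
      have : (monomial (mexp d j) (a j) : MvPolynomial (Fin 2) ℂ)
          = a j • fam ⟨j, hj⟩ := by
        rw [hfam, smul_monomial, smul_eq_mul, mul_one]
      rw [this]
      exact Submodule.smul_mem _ _ (Submodule.subset_span ⟨⟨j, hj⟩, rfl⟩)
    · rw [Submodule.span_le]
      rintro _ ⟨⟨j, hjS⟩, rfl⟩
      have hjr := hSsub hjS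
      have hj : j ≤ d := Nat.lt_succ_iff.mp (Finset.mem_range.mp hjr)
      refine Submodule.mem_inf.mpr ⟨?_, ?_⟩
      · rw [mem_homogeneousSubmodule]
        exact isHomogeneous_monomial 1 (by rw [degree_fin2_s16]; simp; omega)
      · rw [LinearMap.mem_ker]
        show dH2 f (monomial (mexp d j) 1) = 0
        rw [hf, L1 d k j hd hk0 hkd hj, (hcc j hjr).mp hjS, map_zero]
  rw [hspan]
  have hinj : Function.Injective (fun j : {x // x ∈ S} => mexp d (j : ℕ)) :=
    fun x y h => Subtype.ext (mexp_injective d h)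
  have hli : LinearIndependent ℂ fam := by
    have := (basisMonomials (Fin 2) ℂ).linearIndependent.comp _ hinj
    simpa [coe_basisMonomials, hfam, Function.comp_def] using this
  rw [finrank_span_eq_card hli, Fintype.card_coe]
end
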